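/- arXiv:1805.00294 — 12 statements merged into one kernel-verified Lean document; each statement's English description precedes it below -/
import Mathlib

section
/- Let 1 ≤ k < n+1 be integers and let d be an integer with 1 ≤ d ≤ k+1 such that d divides k+1 and d(n+2)/(k+1) is an integer. Then the number of d-additive sequences in X_n^k equals the binomial coefficient C(d(n+2)/(k+1) - 1, d - 1). -/
/-- `α` represents an element of `X_n^k`: a weakly increasing sequence
`{0,…,k} → {0,…,n+1-k}` (normalized to vanish beyond `k`). -/
def IsXseq (n k : ℕ) (α : ℕ → ℕ) : Prop :=
  (∀ i j : ℕ, i ≤ j → j ≤ k → α i ≤ α j) ∧ α k ≤ n + 1 - k ∧ ∀ i : ℕ, k < i → α i = 0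

/-- `d` is a divisor of `(k,n)`: `1 ≤ d ≤ k+1`, `d ∣ k+1` and `d(n+2)/(k+1) ∈ ℤ`. -/
def IsDivOf (n k d : ℕ) : Prop :=
  1 ≤ d ∧ d ≤ k + 1 ∧ d ∣ (k + 1) ∧ (k + 1) ∣ d * (n + 2)

/-- `α` is a `d`-additive sequence: for `d < k+1`, `α d = d·δ/(k+1)` (with `δ = n+1-k`)
and `α (j + i·d) = α j + i·α d` whenever `j + i·d ≤ k`; for `d = k+1`, just `α 0 = 0`. -/
def IsDAdd (n k d : ℕ) (α : ℕ → ℕ) : Prop :=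
  if d = k + 1 then α 0 = 0
  else (k + 1) * α d = d * (n + 1 - k) ∧
    ∀ i j : ℕ, j + i * d ≤ k → α (j + i * d) = α j + i * α d

lemma strictMono_fin_add_le {r : ℕ} {g : Fin r → ℕ} (hg : StrictMono g) :
    ∀ (t : ℕ) (a b : Fin r), (b : ℕ) = (a : ℕ) + t → g a + t ≤ g b := by
  intro t
  induction t with
  | zero =>
    intro a b h
    have hab : a = b := Fin.ext (by omega)
    subst hab; omega
  | succ t ih =>
    intro a b h
    have hb' : (a : ℕ) + t < r := by have := b.isLt; omega
    have h1 := ih a ⟨(a : ℕ) + t, hb'⟩ rfl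
    have h2 : g ⟨(a : ℕ) + t, hb'⟩ < g b := hg (by simp [Fin.lt_def]; omega)
    omega

lemma card_mono_bdd (r c : ℕ) :
    Nat.card {β : Fin r → ℕ // Monotone β ∧ ∀ j, β j ≤ c} = (c + r).choose r := by
  classical
  have key : ∀ β : {β : Fin r → ℕ // Monotone β ∧ ∀ j, β j ≤ c},
      StrictMono (fun j : Fin r =>
        (⟨β.1 j + (j : ℕ), by have := β.2.2 j; have := j.isLt; omega⟩ : Fin (c + r))) := by
    intro β i j hij
    have h1 : β.1 i ≤ β.1 j := β.2.1 hij.le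
    have h2 : (i : ℕ) < (j : ℕ) := hij
    simp only [Fin.mk_lt_mk]
    omega
  let F : {β : Fin r → ℕ // Monotone β ∧ ∀ j, β j ≤ c} →
      {s : Finset (Fin (c + r)) // s.card = r} := fun β =>
    ⟨Finset.univ.image (fun j : Fin r =>
        (⟨β.1 j + (j : ℕ), by have := β.2.2 j; have := j.isLt; omega⟩ : Fin (c + r))),
     by rw [Finset.card_image_of_injective _ (key β).injective, Finset.card_univ,
        Fintype.card_fin]⟩
  have hFinj : Function.Injective F := by
    intro β β' h
    have hs : (F β).1 = (F β').1 := congrArg Subtype.val h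
    have h1 := Finset.orderEmbOfFin_unique (F β).2
      (f := fun j : Fin r => (⟨β.1 j + (j : ℕ), by have := β.2.2 j; have := j.isLt; omega⟩ :
        Fin (c + r)))
      (fun x => Finset.mem_image_of_mem _ (Finset.mem_univ x)) (key β)
    have h2 := Finset.orderEmbOfFin_unique (F β).2
      (f := fun j : Fin r => (⟨β'.1 j + (j : ℕ), by have := β'.2.2 j; have := j.isLt; omega⟩ :
        Fin (c + r)))
      (fun x => by rw [hs]; exact Finset.mem_image_of_mem _ (Finset.mem_univ x)) (key β')
    apply Subtype.ext; funext j
    have h3 := (congrFun h1 j).trans (congrFun h2 j).symm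
    have h4 : β.1 j + (j : ℕ) = β'.1 j + (j : ℕ) := congrArg Fin.val h3
    omega
  have hFsurj : Function.Surjective F := by
    intro s
    set f := s.1.orderEmbOfFin s.2 with hf
    have hle : ∀ j : Fin r, (j : ℕ) ≤ (f j : ℕ) := by
      intro j
      have := strictMono_fin_add_le f.strictMono (j : ℕ) ⟨0, j.pos⟩ j (by simp)
      omega
    have hub : ∀ j : Fin r, (f j : ℕ) ≤ c + (j : ℕ) := by
      intro j
      have hr : 0 < r := j.pos
      have hlast : (r - 1 : ℕ) < r := by omega
      have := strictMono_fin_add_le f.strictMono ((r - 1) - (j : ℕ)) j ⟨r - 1, hlast⟩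
          (by simp; omega)
      have h2 : (f ⟨r - 1, hlast⟩ : ℕ) < c + r := (f ⟨r - 1, hlast⟩).isLt
      have h3 := j.isLt
      omega
    refine ⟨⟨fun j => (f j : ℕ) - (j : ℕ), ?_, ?_⟩, ?_⟩
    · intro i j hij
      have h1 := strictMono_fin_add_le f.strictMono ((j : ℕ) - (i : ℕ)) i j
        (by have : (i : ℕ) ≤ (j : ℕ) := hij; omega)
      have := hle i
      simp only
      omega
    · intro j
      have := hub j
      simp only
      omega
    · apply Subtype.ext
      show Finset.univ.image _ = s.1
      have heq : ∀ j : Fin r,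
          (⟨(f j : ℕ) - (j : ℕ) + (j : ℕ), by have := hub j; have := j.isLt; omega⟩ :
            Fin (c + r)) = f j := by
        intro j; apply Fin.ext; simp only; have := hle j; omega
      calc Finset.univ.image _ = Finset.univ.image (fun j => f j) := by
            apply Finset.image_congr; intro j _; exact heq j
        _ = s.1 := by
            ext x
            simp only [Finset.mem_image, Finset.mem_univ, true_and]
            constructor
            · rintro ⟨j, rfl⟩; exact Finset.orderEmbOfFin_mem s.1 s.2 j
            · intro hx
              have : x ∈ Set.range f := by
                rw [Finset.range_orderEmbOfFin]; exact hx
              obtain ⟨j, hj⟩ := this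
              exact ⟨j, hj⟩
  rw [Nat.card_congr (Equiv.ofBijective F ⟨hFinj, hFsurj⟩), Nat.card_eq_fintype_card,
    Fintype.card_finset_len, Fintype.card_fin]

/-- The "block" function: `buildB d β 0 = 0` and `buildB d β t = β (t-1)` for `1 ≤ t ≤ d-1`. -/
def buildB (d : ℕ) (β : Fin (d - 1) → ℕ) : ℕ → ℕ :=
  fun t => if h : 1 ≤ t ∧ t - 1 < d - 1 then β ⟨t - 1, h.2⟩ else 0

/-- The sequence built from block data `β` and step `c`. -/
def buildα (k d c : ℕ) (β : Fin (d - 1) → ℕ) : ℕ → ℕ :=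
  fun i => if i ≤ k then buildB d β (i % d) + (i / d) * c else 0

lemma buildB_le {d c : ℕ} {β : Fin (d - 1) → ℕ} (hβc : ∀ j, β j ≤ c) (t : ℕ) :
    buildB d β t ≤ c := by
  unfold buildB
  split
  · exact hβc _
  · omega

lemma buildB_mono {d : ℕ} {β : Fin (d - 1) → ℕ} (hβ : Monotone β) {s t : ℕ}
    (hst : s ≤ t) (htd : t < d) : buildB d β s ≤ buildB d β t := by
  unfold buildB
  by_cases hs : 1 ≤ s
  · rw [dif_pos ⟨hs, by omega⟩, dif_pos ⟨by omega, by omega⟩]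
    exact hβ (by simp [Fin.mk_le_mk]; omega)
  · rw [dif_neg (by omega)]
    omega

/-- Reconstruction: any `d`-additive element of `X_n^k` is of the prescribed block form. -/
lemma recon {n k d c : ℕ} (hd1 : 1 ≤ d) (hd2 : d ≤ k + 1) (hc : (k + 1) * c = d * (n + 1 - k))
    {α : ℕ → ℕ} (ha : IsDAdd n k d α) :
    α 0 = 0 ∧ (d ≤ k → α d = c) ∧ ∀ i ≤ k, α i = α (i % d) + (i / d) * c := by
  unfold IsDAdd at ha
  by_cases h : d = k + 1
  · rw [if_pos h] at ha
    refine ⟨ha, by omega, fun i hi => ?_⟩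
    rw [Nat.mod_eq_of_lt (by omega), Nat.div_eq_of_lt (by omega)]
    simp [ha]
  · rw [if_neg h] at ha
    obtain ⟨h1, h2⟩ := ha
    have hαd : α d = c := by
      have := h1.trans hc.symm
      exact (Nat.eq_of_mul_eq_mul_left (by omega) this.symm).symm
    have h0 : α 0 = 0 := by
      have := h2 1 0 (by omega)
      simp at this
      omega
    refine ⟨h0, fun _ => hαd, fun i hi => ?_⟩
    have h3 := h2 (i / d) (i % d) (by rw [Nat.mod_add_div']; exact hi)
    rw [Nat.mod_add_div'] at h3
    rw [h3, hαd]

lemma buildα_isXseq {n k d c m : ℕ} (hd1 : 1 ≤ d) (hd2 : d ≤ k + 1)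
    (hm : k + 1 = d * (m + 1)) (hmc : (m + 1) * c = n + 1 - k)
    {β : Fin (d - 1) → ℕ} (hβ : Monotone β) (hβc : ∀ j, β j ≤ c) :
    IsXseq n k (buildα k d c β) := by
  refine ⟨?_, ?_, fun i hi => if_neg (by omega)⟩
  · intro i j hij hjk
    have hik : i ≤ k := le_trans hij hjk
    unfold buildα
    rw [if_pos hik, if_pos hjk]
    have hdiv : i / d ≤ j / d := Nat.div_le_div_right hij
    rcases eq_or_lt_of_le hdiv with he | hl
    · have h1 := Nat.mod_add_div' i d
      have h2 := Nat.mod_add_div' j d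
      rw [he] at h1
      have hmod : i % d ≤ j % d := by omega
      exact Nat.add_le_add (buildB_mono hβ hmod (Nat.mod_lt _ (by omega))) (by rw [he])
    · have h0 := buildB_le hβc (i % d)
      have h1 : c + i / d * c = (i / d + 1) * c := by ring
      have h2 : (i / d + 1) * c ≤ j / d * c := Nat.mul_le_mul_right _ (by omega)
      omega
  · have hcomm : d * m = m * d := Nat.mul_comm d m
    have hm2 : k + 1 = d * m + d := by rw [hm, Nat.mul_succ]
    have hk : k = (d - 1) + m * d := by omega
    unfold buildα
    rw [if_pos (le_refl k)]
    have hmod : k % d = d - 1 := by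
      conv_lhs => rw [hk]
      rw [Nat.add_mul_mod_self_right, Nat.mod_eq_of_lt (by omega)]
    have hdiv : k / d = m := by
      conv_lhs => rw [hk]
      rw [Nat.add_mul_div_right _ _ (by omega : 0 < d), Nat.div_eq_of_lt (by omega)]
      omega
    rw [hmod, hdiv]
    have h3 := buildB_le hβc (d - 1)
    have h4 : c + m * c = (m + 1) * c := by ring
    omega

lemma buildα_isDAdd {n k d c : ℕ} (hd1 : 1 ≤ d) (hd2 : d ≤ k + 1)
    (hc : (k + 1) * c = d * (n + 1 - k)) (β : Fin (d - 1) → ℕ) :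
    IsDAdd n k d (buildα k d c β) := by
  have hB0 : buildB d β 0 = 0 := by unfold buildB; rw [dif_neg (by omega)]
  unfold IsDAdd
  split
  · next h =>
    unfold buildα
    rw [if_pos (by omega : 0 ≤ k)]
    simp [hB0]
  · next h =>
    have hdk : d ≤ k := by omega
    have hαd : buildα k d c β d = c := by
      unfold buildα
      rw [if_pos hdk, Nat.mod_self, Nat.div_self (by omega), hB0]
      omega
    refine ⟨by rw [hαd]; exact hc, fun i j hij => ?_⟩
    rw [hαd]
    unfold buildα
    rw [if_pos hij, if_pos (by omega : j ≤ k), Nat.add_mul_mod_self_right,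
      Nat.add_mul_div_right _ _ (by omega : 0 < d)]
    ring

lemma buildα_eval {k d c : ℕ} (hd2 : d ≤ k + 1) (β : Fin (d - 1) → ℕ) (j : Fin (d - 1)) :
    buildα k d c β ((j : ℕ) + 1) = β j := by
  have hj := j.isLt
  unfold buildα buildB
  rw [if_pos (by omega), Nat.mod_eq_of_lt (by omega), Nat.div_eq_of_lt (by omega),
    dif_pos ⟨by omega, by simpa using hj⟩]
  simp

/-- The number of `d`-additive sequences in `X_n^k` equals `C(d(n+2)/(k+1) - 1, d - 1)`. -/
theorem stmt2 (n k d : ℕ) (hk : 1 ≤ k) (hkn : k < n + 1) (hd : IsDivOf n k d) :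
    Nat.card {α : ℕ → ℕ // IsXseq n k α ∧ IsDAdd n k d α} =
      Nat.choose (d * (n + 2) / (k + 1) - 1) (d - 1) := by
  classical
  obtain ⟨hd1, hd2, hd3, hd4⟩ := hd
  obtain ⟨q, hq⟩ := hd4
  obtain ⟨m', hm'⟩ := hd3
  rcases m' with _ | m
  · omega
  have hdq : d ≤ q := by nlinarith [hq]
  set c := q - d with hcdef
  have hmul := Nat.mul_comm (k + 1) d
  have h1 : (k + 1) * c + (k + 1) * d = (k + 1) * q := by
    rw [← Nat.mul_add]; congr 1; omega
  have h2 : d * (n + 1 - k) + d * (k + 1) = d * (n + 2) := by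
    rw [← Nat.mul_add]; congr 1; omega
  have hc : (k + 1) * c = d * (n + 1 - k) := by omega
  have hmc : (m + 1) * c = n + 1 - k := by
    refine Nat.eq_of_mul_eq_mul_left (show 0 < d by omega) ?_
    rw [← hc, hm']; ring
  let F : {β : Fin (d - 1) → ℕ // Monotone β ∧ ∀ j, β j ≤ c} →
      {α : ℕ → ℕ // IsXseq n k α ∧ IsDAdd n k d α} := fun β =>
    ⟨buildα k d c β.1, buildα_isXseq hd1 hd2 hm' hmc β.2.1 β.2.2, buildα_isDAdd hd1 hd2 hc β.1⟩
  have hFinj : Function.Injective F := by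
    intro β β' h
    have hs : buildα k d c β.1 = buildα k d c β'.1 := congrArg Subtype.val h
    apply Subtype.ext; funext j
    rw [← buildα_eval (c := c) hd2 β.1 j, ← buildα_eval (c := c) hd2 β'.1 j, hs]
  have hFsurj : Function.Surjective F := by
    intro α
    obtain ⟨⟨hmono, hk1, hk2⟩, hA⟩ := α.2
    obtain ⟨h0, hαd, hrec⟩ := recon hd1 hd2 hc hA
    have hd1k : d - 1 ≤ k := by omega
    have hble : ∀ t, t ≤ k → t ≤ d → α.1 t ≤ c := by
      intro t ht htd
      by_cases hdk : d ≤ k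
      · exact le_trans (hmono t d htd hdk) (le_of_eq (hαd hdk))
      · have hdk' : d = k + 1 := by omega
        have hm0 : m = 0 := by
          have h3 := hm'
          rw [hdk'] at h3
          have h4 : (k + 1) * 1 = (k + 1) * (m + 1) := by omega
          have := Nat.eq_of_mul_eq_mul_left (show 0 < k + 1 by omega) h4
          omega
        have hc' : c = n + 1 - k := by
          have h5 := hmc
          rw [hm0] at h5
          omega
        exact le_trans (hmono t k ht (le_refl k)) (by omega)
    refine ⟨⟨fun j => α.1 ((j : ℕ) + 1), ?_, ?_⟩, ?_⟩
    · intro i j hij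
      have hj := j.isLt
      exact hmono ((i : ℕ) + 1) ((j : ℕ) + 1) (by have : (i : ℕ) ≤ (j : ℕ) := hij; omega)
        (by omega)
    · intro j
      have hj := j.isLt
      exact hble ((j : ℕ) + 1) (by omega) (by omega)
    · apply Subtype.ext
      funext i
      show buildα k d c _ i = α.1 i
      by_cases hik : i ≤ k
      · unfold buildα
        rw [if_pos hik, hrec i hik]
        congr 1
        have ht : i % d < d := Nat.mod_lt _ (by omega)
        unfold buildB
        by_cases h1t : 1 ≤ i % d
        · rw [dif_pos ⟨h1t, by omega⟩]
          show α.1 (i % d - 1 + 1) = α.1 (i % d)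
          have harg : i % d - 1 + 1 = i % d := by omega
          rw [harg]
        · rw [dif_neg (by omega)]
          have : i % d = 0 := by omega
          rw [this, h0]
      · unfold buildα
        rw [if_neg hik, hk2 i (by omega)]
  rw [← Nat.card_congr (Equiv.ofBijective F ⟨hFinj, hFsurj⟩), card_mono_bdd]
  have hqval : d * (n + 2) / (k + 1) = q := by
    rw [hq, Nat.mul_div_cancel_left _ (by omega : 0 < k + 1)]
  rw [hqval]
  congr 1
  omega
end

section
/- Let 1 ≤ v ≤ k and 1 ≤ u ≤ k be integers with u + v ≤ k+1, and let β : {1,…,k} → ℤ satisfy β(j+u) = β(j)+β(u) for 1 ≤ j ≤ k−u and β(j+v) = β(j)+β(v) for 1 ≤ j ≤ k−v. Then there exists a unique extension β : ℤ → ℤ satisfying, for all i,j ∈ ℤ, both β(j + i·v) = β(j) + i·β(v) and β(j + i·u) = β(j) + i·β(u). -/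
/-- Let `1 ≤ v ≤ k`, `1 ≤ u ≤ k` with `u + v ≤ k + 1`, and let `β` (defined on `{1,…,k}`)
satisfy `β(j+u) = β(j)+β(u)` for `1 ≤ j ≤ k−u` and `β(j+v) = β(j)+β(v)` for `1 ≤ j ≤ k−v`.
Then there exists a unique extension `γ : ℤ → ℤ` satisfying, for all `i, j ∈ ℤ`, both
`γ(j + i·v) = γ(j) + i·γ(v) = γ(j) + γ(i·v)` and `γ(j + i·u) = γ(j) + i·γ(u) = γ(j) + γ(i·u)`. -/
theorem stmt4 (k u v : ℕ) (hv1 : 1 ≤ v) (hvk : v ≤ k) (hu1 : 1 ≤ u) (huk : u ≤ k)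
    (huv : u + v ≤ k + 1) (β : ℤ → ℤ)
    (hβu : ∀ j : ℤ, 1 ≤ j → j ≤ (k : ℤ) - u → β (j + u) = β j + β u)
    (hβv : ∀ j : ℤ, 1 ≤ j → j ≤ (k : ℤ) - v → β (j + v) = β j + β v) :
    ∃! γ : ℤ → ℤ,
      (∀ j : ℤ, 1 ≤ j → j ≤ (k : ℤ) → γ j = β j) ∧
      (∀ i j : ℤ, γ (j + i * v) = γ j + i * γ v ∧ γ (j + i * v) = γ j + γ (i * v)) ∧
      (∀ i j : ℤ, γ (j + i * u) = γ j + i * γ u ∧ γ (j + i * u) = γ j + γ (i * u)) := by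
  have hU0 : 0 < (u : ℤ) := by exact_mod_cast hu1
  have hU0' : (u : ℤ) ≠ 0 := ne_of_gt hU0
  set γ : ℤ → ℤ := fun n => β ((n - 1) % (u : ℤ) + 1) + ((n - 1) / (u : ℤ)) * β u with hγdef
  -- basic decomposition facts
  have hr1 : ∀ n : ℤ, 1 ≤ (n - 1) % (u : ℤ) + 1 := by
    intro n
    have := Int.emod_nonneg (n - 1) hU0'
    omega
  have hru : ∀ n : ℤ, (n - 1) % (u : ℤ) + 1 ≤ (u : ℤ) := by
    intro n
    have := Int.emod_lt_of_pos (n - 1) hU0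
    omega
  have hdecomp : ∀ n : ℤ, n = ((n - 1) % (u : ℤ) + 1) + ((n - 1) / (u : ℤ)) * (u : ℤ) := by
    intro n
    have := Int.emod_add_mul_ediv (n - 1) (u : ℤ)
    linarith [this]
  -- u-shift for γ
  have hγu : ∀ (i n : ℤ), γ (n + i * u) = γ n + i * β u := by
    intro i n
    have h1 : n + i * u - 1 = (n - 1) + (u : ℤ) * i := by ring
    have h2 : (n + i * u - 1) % (u : ℤ) = (n - 1) % (u : ℤ) := by
      rw [h1, Int.add_mul_emod_self_left]
    have h3 : (n + i * u - 1) / (u : ℤ) = (n - 1) / (u : ℤ) + i := by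
      rw [h1, Int.add_mul_ediv_left _ _ hU0']
    simp only [hγdef, h2, h3]
    ring
  -- β is linear along u-steps within [1,k]
  have hrec : ∀ q : ℕ, ∀ r : ℤ, 1 ≤ r → r + q * u ≤ (k : ℤ) →
      β (r + q * u) = β r + q * β u := by
    intro q
    induction q with
    | zero => intro r _ _; simp
    | succ q ih =>
      intro r hr hk'
      have hq : 0 ≤ (q : ℤ) * u := by positivity
      have hle : r + q * u ≤ (k : ℤ) - u := by push_cast at hk' ⊢; linarith
      have hge : 1 ≤ r + (q : ℤ) * u := by linarith
      have h1 : r + ((q : ℕ) + 1 : ℤ) * u = (r + q * u) + u := by ring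
      have h2 : (r + (q : ℤ) * u) + u = (r + (q : ℤ) * u) + (u : ℤ) := rfl
      calc β (r + ((q : ℕ) + 1 : ℤ) * u) = β ((r + q * u) + (u : ℤ)) := by rw [h1]
      _ = β (r + q * u) + β u := hβu _ hge hle
      _ = β r + q * β u + β u := by rw [ih r hr (by linarith)]
      _ = β r + ((q : ℕ) + 1 : ℤ) * β u := by ring
  -- γ agrees with β on [1,k]
  have hγβ : ∀ n : ℤ, 1 ≤ n → n ≤ (k : ℤ) → γ n = β n := by
    intro n h1 hk'
    have hq0 : 0 ≤ (n - 1) / (u : ℤ) := Int.ediv_nonneg (by omega) (le_of_lt hU0)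
    obtain ⟨q, hq⟩ : ∃ q : ℕ, ((n - 1) / (u : ℤ)) = (q : ℤ) := ⟨((n-1)/(u:ℤ)).toNat, (Int.toNat_of_nonneg hq0).symm⟩
    have hd := hdecomp n
    have hβn : β (((n - 1) % (u : ℤ) + 1) + q * u) = β ((n - 1) % (u : ℤ) + 1) + q * β u := by
      apply hrec q _ (hr1 n)
      rw [← hq, ← hd]; exact hk'
    simp only [hγdef, hq]
    rw [← hβn]
    congr 1
    rw [← hq, ← hd]
  have hγu' : ∀ r : ℤ, γ r = β r → γ (r + v) = γ r + β v → ∀ q : ℤ, True := fun _ _ _ _ => trivial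
  -- single v-shift for γ
  have hγv1 : ∀ n : ℤ, γ (n + v) = γ n + β v := by
    intro n
    set r : ℤ := (n - 1) % (u : ℤ) + 1 with hrdef
    set q : ℤ := (n - 1) / (u : ℤ) with hqdef
    have hd : n = r + q * u := hdecomp n
    have h1 : n + v = (r + v) + q * u := by rw [hd]; ring
    have hVk : (v : ℤ) ≤ k := by exact_mod_cast hvk
    have hV1 : (1 : ℤ) ≤ v := by exact_mod_cast hv1
    have hUk : (u : ℤ) ≤ k := by exact_mod_cast huk
    have key : γ (r + v) = γ r + β v := by
      have hγr : γ r = β r := hγβ r (hr1 n) (le_trans (hru n) hUk)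
      by_cases hcase : r + v ≤ (k : ℤ)
      · have : γ (r + v) = β (r + v) := hγβ _ (by linarith [hr1 n]) hcase
        rw [this, hβv r (hr1 n) (by linarith), hγr]
      · -- r + v = k+1, and then r = u, u + v = k + 1
        have hruv : r + (v : ℤ) ≤ (u : ℤ) + v := by linarith [hru n]
        have huvk : (u : ℤ) + v ≤ (k : ℤ) + 1 := by exact_mod_cast huv
        have hr_eq : r = (u : ℤ) := by omega
        have hγv : γ (v : ℤ) = β v := hγβ _ hV1 hVk
        have : γ ((v : ℤ) + 1 * u) = γ (v : ℤ) + 1 * β u := hγu 1 v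
        have h2 : r + (v : ℤ) = (v : ℤ) + 1 * u := by rw [hr_eq]; ring
        rw [h2, this, hγv, hγr, hr_eq]
        have hβuu : β ((u : ℕ) : ℤ) = β u := rfl
        ring
    calc γ (n + v) = γ (r + v) + q * β u := by rw [h1]; exact hγu q (r + v)
    _ = γ r + β v + q * β u := by rw [key]
    _ = (γ r + q * β u) + β v := by ring
    _ = γ (r + q * u) + β v := by rw [hγu q r]
    _ = γ n + β v := by rw [← hd]
  -- full v-shift
  have hγv : ∀ (i n : ℤ), γ (n + i * v) = γ n + i * β v := by
    intro i
    induction i using Int.induction_on with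
    | zero => intro n; simp
    | succ i ih =>
      intro n
      have h1 : n + ((i : ℤ) + 1) * v = (n + i * v) + v := by ring
      rw [h1, hγv1, ih]; ring
    | pred i ih =>
      intro n
      have h1 : n + (-(i : ℤ) - 1) * v + v = n + (-(i : ℤ)) * v := by ring
      have := hγv1 (n + (-(i : ℤ) - 1) * v)
      rw [h1, ih n] at this
      linarith [this]
  have hγ0 : γ 0 = 0 := by
    have h1 : γ (0 + 1 * u) = γ 0 + 1 * β u := hγu 1 0
    have h2 : γ ((u : ℕ) : ℤ) = β u := hγβ _ (by exact_mod_cast hu1) (by exact_mod_cast huk)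
    have h3 : (0 : ℤ) + 1 * u = ((u : ℕ) : ℤ) := by ring
    rw [h3, h2] at h1
    linarith
  have hγvv : γ ((v : ℕ) : ℤ) = β v := hγβ _ (by exact_mod_cast hv1) (by exact_mod_cast hvk)
  have hγuu : γ ((u : ℕ) : ℤ) = β u := hγβ _ (by exact_mod_cast hu1) (by exact_mod_cast huk)
  have hγiv : ∀ i : ℤ, γ (i * v) = i * β v := by
    intro i
    have := hγv i 0
    rw [hγ0] at this
    simpa using this
  have hγiu : ∀ i : ℤ, γ (i * u) = i * β u := by
    intro i
    have := hγu i 0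
    rw [hγ0] at this
    simpa using this
  refine ⟨γ, ⟨hγβ, ?_, ?_⟩, ?_⟩
  · intro i j
    constructor
    · rw [hγv i j, hγvv]
    · rw [hγv i j, hγiv]
  · intro i j
    constructor
    · rw [hγu i j, hγuu]
    · rw [hγu i j, hγiu]
  · rintro δ ⟨hδβ, _hδv, hδu⟩
    funext n
    set r : ℤ := (n - 1) % (u : ℤ) + 1 with hrdef
    set q : ℤ := (n - 1) / (u : ℤ) with hqdef
    have hd : n = r + q * u := hdecomp n
    have hUk : (u : ℤ) ≤ k := by exact_mod_cast huk
    have hδr : δ r = β r := hδβ r (hr1 n) (le_trans (hru n) hUk)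
    have hδu' : δ ((u : ℕ) : ℤ) = β u := hδβ _ (by exact_mod_cast hu1) hUk
    have h1 : δ (r + q * u) = δ r + q * δ u := (hδu q r).1
    have hγr : γ r = β r := hγβ r (hr1 n) (le_trans (hru n) hUk)
    calc δ n = δ (r + q * u) := by rw [← hd]
    _ = β r + q * β u := by rw [h1, hδr, hδu']
    _ = γ r + q * β u := by rw [hγr]
    _ = γ (r + q * u) := by rw [hγu q r]
    _ = γ n := by rw [← hd]
end

section
/- Let 1 ≤ k < n+1 be integers, let d and d' be divisors of (k,n) with d' dividing d. Then every d'-additive sequence in X_n^k is also d-additive. -/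
/-- If `d` and `d'` are divisors of `(k,n)` with `d' ∣ d`, then every `d'`-additive
sequence in `X_n^k` is also `d`-additive. -/
theorem stmt6 (n k d d' : ℕ) (hk : 1 ≤ k) (hkn : k < n + 1)
    (hd : IsDivOf n k d) (hd' : IsDivOf n k d') (hdd : d' ∣ d)
    (α : ℕ → ℕ) (hα : IsXseq n k α) (h : IsDAdd n k d' α) :
    IsDAdd n k d α := by
  unfold IsDAdd at h ⊢
  by_cases hdk : d = k + 1
  · rw [if_pos hdk]
    by_cases hd'k : d' = k + 1
    · rwa [if_pos hd'k] at h
    · rw [if_neg hd'k] at h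
      obtain ⟨h1, h2⟩ := h
      have hle : d' ≤ k := by have := hd'.2.1; omega
      have := h2 1 0 (by simpa)
      simpa using this
  · rw [if_neg hdk]
    have hd1 : 1 ≤ d := hd.1
    have hd'd : d' ≤ d := Nat.le_of_dvd (by omega) hdd
    have hd'k : d' ≠ k + 1 := by have := hd.2.1; omega
    rw [if_neg hd'k] at h
    obtain ⟨h1, h2⟩ := h
    obtain ⟨t, ht⟩ := hdd
    have hdlek : d ≤ k := by have := hd.2.1; omega
    have hα0 : α 0 = 0 := by
      have := h2 1 0 (by omega)
      simpa using this
    have htd : t * d' = d := by rw [ht]; ring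
    have hαd : α d = t * α d' := by
      have := h2 t 0 (by rw [zero_add, htd]; exact hdlek)
      rw [zero_add, htd] at this
      simpa [hα0] using this
    constructor
    · calc (k + 1) * α d = t * ((k + 1) * α d') := by rw [hαd]; ring
      _ = t * (d' * (n + 1 - k)) := by rw [h1]
      _ = d * (n + 1 - k) := by rw [ht]; ring
    · intro i j hij
      have hitd : i * t * d' = i * d := by rw [ht]; ring
      have key := h2 (i * t) j (by rw [hitd]; exact hij)
      rw [hitd] at key
      rw [key, hαd]; ring
end

section
/- Let 1 ≤ k < n+1 be integers, let {d_i}_{i∈I} be a finite nonempty family of divisors of (k,n), and let d = gcd{d_i}. Then a sequence α ∈ X_n^k is d_i-additive for every i ∈ I if and only if α is d-additive; equivalently, the intersection over i ∈ I of the sets of d_i-additive sequences equals the set of d-additive sequences. -/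
private lemma step_to_full {k d : ℕ} {α : ℕ → ℕ}
    (hstep : ∀ x, x + d ≤ k → α (x + d) = α x + α d) :
    ∀ i j, j + i * d ≤ k → α (j + i * d) = α j + i * α d := by
  intro i
  induction i with
  | zero => simp
  | succ m ih =>
    intro j hj
    have e : (m + 1) * d = m * d + d := Nat.succ_mul m d
    have e2 : (m + 1) * α d = m * α d + α d := Nat.succ_mul m (α d)
    rw [e, ← add_assoc] at hj ⊢
    rw [hstep _ hj, ih j (le_trans (Nat.le_add_right _ d) hj), e2, add_assoc]

private lemma subP {k δ u t₂ : ℕ} {α : ℕ → ℕ} (h2 : 1 ≤ t₂)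
    (hk1 : u + t₂ + t₂ ≤ k + 1)
    (P1 : ∀ x, x + (u + t₂) ≤ k → (k+1) * α (x + (u + t₂)) = (k+1) * α x + (u + t₂) * δ)
    (P2 : ∀ x, x + t₂ ≤ k → (k+1) * α (x + t₂) = (k+1) * α x + t₂ * δ) :
    ∀ x, x + u ≤ k → (k+1) * α (x + u) = (k+1) * α x + u * δ := by
  intro x hx
  have hδ : (u + t₂) * δ = u * δ + t₂ * δ := add_mul u t₂ δ
  by_cases hcase : x + (u + t₂) ≤ k
  · have e1 := P1 x hcase
    have e2 := P2 (x + u) (by omega)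
    rw [show x + u + t₂ = x + (u + t₂) by omega] at e2
    linarith
  · obtain ⟨y, hy⟩ : ∃ y, x = y + t₂ := ⟨x - t₂, by omega⟩
    have e1 := P1 y (by omega)
    rw [show y + (u + t₂) = x + u by omega] at e1
    have e2 := P2 y (by omega)
    rw [show y + t₂ = x from hy.symm] at e2
    linarith

private lemma euclid {k δ : ℕ} {α : ℕ → ℕ} :
    ∀ N t₁ t₂, t₁ + t₂ ≤ N → 1 ≤ t₁ → 1 ≤ t₂ → t₁ + t₂ ≤ k + 1 →
    (∀ x, x + t₁ ≤ k → (k+1) * α (x + t₁) = (k+1) * α x + t₁ * δ) →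
    (∀ x, x + t₂ ≤ k → (k+1) * α (x + t₂) = (k+1) * α x + t₂ * δ) →
    ∀ x, x + Nat.gcd t₁ t₂ ≤ k →
      (k+1) * α (x + Nat.gcd t₁ t₂) = (k+1) * α x + Nat.gcd t₁ t₂ * δ := by
  intro N
  induction N with
  | zero => intro t₁ t₂ h h1; omega
  | succ N ih =>
    intro t₁ t₂ hN h1 h2 hk1 P1 P2
    rcases lt_trichotomy t₁ t₂ with hlt | heq | hgt
    · have ht : t₂ = (t₂ - t₁) + t₁ := by omega
      have hg : Nat.gcd t₁ t₂ = Nat.gcd (t₂ - t₁) t₁ := by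
        conv_lhs => rw [Nat.gcd_comm, ht, Nat.gcd_add_self_left]
      have P2' : ∀ x, x + ((t₂ - t₁) + t₁) ≤ k →
          (k+1) * α (x + ((t₂ - t₁) + t₁)) = (k+1) * α x + ((t₂ - t₁) + t₁) * δ := by
        rw [← ht]; exact P2
      have Pv := subP h1 (by omega) P2' P1
      rw [hg]
      exact ih (t₂ - t₁) t₁ (by omega) (by omega) h1 (by omega) Pv P1
    · subst heq; rwa [Nat.gcd_self]
    · have ht : t₁ = (t₁ - t₂) + t₂ := by omega
      have hg : Nat.gcd t₁ t₂ = Nat.gcd (t₁ - t₂) t₂ := by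
        conv_lhs => rw [ht, Nat.gcd_add_self_left]
      have P1' : ∀ x, x + ((t₁ - t₂) + t₂) ≤ k →
          (k+1) * α (x + ((t₁ - t₂) + t₂)) = (k+1) * α x + ((t₁ - t₂) + t₂) * δ := by
        rw [← ht]; exact P1
      have Pu := subP h2 (by omega) P1' P2
      rw [hg]
      exact ih (t₁ - t₂) t₂ (by omega) (by omega) h2 (by omega) Pu P2

private lemma alpha_zero {n k d : ℕ} {α : ℕ → ℕ} (hd : 1 ≤ d) (hdk : d ≤ k)
    (h : IsDAdd n k d α) : α 0 = 0 := by
  rw [IsDAdd, if_neg (by omega)] at h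
  have h1 := h.2 1 0 (by simpa using hdk)
  simp at h1
  omega

private lemma dadd_step {n k d : ℕ} {α : ℕ → ℕ} (hdk : d ≤ k)
    (h : IsDAdd n k d α) :
    ∀ x, x + d ≤ k → (k+1) * α (x + d) = (k+1) * α x + d * (n + 1 - k) := by
  rw [IsDAdd, if_neg (by omega)] at h
  intro x hx
  have h1 := h.2 1 x (by simpa using hx)
  simp at h1
  rw [h1, mul_add, h.1]

private lemma proper_div_le {d m : ℕ} (hd : d ∣ m) (hne : d ≠ m) (hm : 1 ≤ m) :
    2 * d ≤ m := by
  obtain ⟨c, hc⟩ := hd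
  have h2 : 2 ≤ c := by
    rcases Nat.lt_or_ge c 2 with h | h
    · interval_cases c <;> simp_all
    · exact h
  have h3 : d * 2 ≤ d * c := Nat.mul_le_mul_left d h2
  rw [mul_comm d 2] at h3
  rw [hc]
  exact h3

private lemma key {n k : ℕ} (hk : 1 ≤ k) {d₁ d₂ : ℕ} {α : ℕ → ℕ}
    (h11 : 1 ≤ d₁) (h1d : d₁ ∣ k + 1) (h21 : 1 ≤ d₂) (h2d : d₂ ∣ k + 1)
    (a1 : IsDAdd n k d₁ α) (a2 : IsDAdd n k d₂ α) :
    IsDAdd n k (Nat.gcd d₁ d₂) α := by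
  by_cases e1 : d₁ = k + 1
  · subst e1
    rw [Nat.gcd_comm, Nat.gcd_eq_left h2d]
    exact a2
  by_cases e2 : d₂ = k + 1
  · subst e2
    rw [Nat.gcd_eq_left h1d]
    exact a1
  have hb1 : 2 * d₁ ≤ k + 1 := proper_div_le h1d e1 (by omega)
  have hb2 : 2 * d₂ ≤ k + 1 := proper_div_le h2d e2 (by omega)
  have hd1k : d₁ ≤ k := by omega
  have hd2k : d₂ ≤ k := by omega
  have P1 := dadd_step hd1k a1
  have P2 := dadd_step hd2k a2
  set g := Nat.gcd d₁ d₂ with hg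
  have hg1 : 1 ≤ g := Nat.gcd_pos_of_pos_left d₂ h11
  have hgk : g ≤ k := le_trans (Nat.gcd_le_left d₂ h11) hd1k
  have Pg := euclid (δ := n + 1 - k) (α := α) (d₁ + d₂) d₁ d₂ le_rfl h11 h21
    (by omega) P1 P2
  have α0 : α 0 = 0 := alpha_zero h11 hd1k a1
  have hαg : (k+1) * α g = g * (n + 1 - k) := by
    have := Pg 0 (by omega)
    simpa [α0] using this
  rw [IsDAdd, if_neg (by omega)]
  refine ⟨hαg, step_to_full ?_⟩
  intro x hx
  have h1 := Pg x hx
  have h2 : (k+1) * α (x + g) = (k+1) * (α x + α g) := by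
    rw [mul_add]; linarith
  exact Nat.eq_of_mul_eq_mul_left (by omega) h2

private lemma mono {n k g e : ℕ} {α : ℕ → ℕ} (hg1 : 1 ≤ g) (hge : g ∣ e)
    (hek : e ≤ k + 1) (he1 : 1 ≤ e) (h : IsDAdd n k g α) : IsDAdd n k e α := by
  have hgle : g ≤ e := Nat.le_of_dvd (by omega) hge
  by_cases hgk : g = k + 1
  · have : e = k + 1 := by omega
    subst this
    rw [IsDAdd, if_pos rfl]
    rw [hgk] at h
    rw [IsDAdd, if_pos rfl] at h
    exact h
  have hgkle : g ≤ k := by omega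
  have α0 : α 0 = 0 := alpha_zero hg1 hgkle h
  rw [IsDAdd, if_neg hgk] at h
  obtain ⟨vg, addg⟩ := h
  obtain ⟨m, hm⟩ := hge
  by_cases hek1 : e = k + 1
  · rw [IsDAdd, if_pos hek1]; exact α0
  have hekk : e ≤ k := by omega
  have hmg : m * g = e := by rw [mul_comm, ← hm]
  have hαe : α e = m * α g := by
    have h1 := addg m 0 (by rw [zero_add, hmg]; exact hekk)
    rw [zero_add, hmg, α0, zero_add] at h1
    exact h1
  rw [IsDAdd, if_neg hek1]
  constructor
  · calc (k+1) * α e = m * ((k+1) * α g) := by rw [hαe]; ring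
    _ = m * (g * (n + 1 - k)) := by rw [vg]
    _ = e * (n + 1 - k) := by rw [← hmg]; ring
  · refine step_to_full ?_
    intro x hx
    have h2 := addg m x (by rw [hmg]; exact hx)
    rw [hmg] at h2
    rw [h2, hαe]

/-- For a finite nonempty family `{dᵢ}` of divisors of `(k,n)` with gcd `d`:
`α` is `dᵢ`-additive for every `i` iff `α` is `d`-additive; equivalently the intersection
of the sets of `dᵢ`-additive sequences equals the set of `d`-additive sequences. -/
theorem stmt7 (n k : ℕ) (hk : 1 ≤ k) (hkn : k < n + 1)
    (s : Finset ℕ) (hs : s.Nonempty) (h : ∀ e ∈ s, IsDivOf n k e) :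
    (∀ α : ℕ → ℕ, IsXseq n k α →
      ((∀ e ∈ s, IsDAdd n k e α) ↔ IsDAdd n k (s.gcd id) α)) ∧
    (⋂ e ∈ s, {α : ℕ → ℕ | IsXseq n k α ∧ IsDAdd n k e α}) =
      {α : ℕ → ℕ | IsXseq n k α ∧ IsDAdd n k (s.gcd id) α} := by
  have main : ∀ α : ℕ → ℕ,
      ((∀ e ∈ s, IsDAdd n k e α) ↔ IsDAdd n k (s.gcd id) α) := by
    intro α
    constructor
    · intro hall
      have aux : ∀ t : Finset ℕ, t ⊆ s → t.Nonempty →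
          1 ≤ t.gcd id ∧ t.gcd id ∣ k + 1 ∧ IsDAdd n k (t.gcd id) α := by
        intro t
        induction t using Finset.induction_on with
        | empty => intro _ hne; simp at hne
        | @insert a t _ ih =>
          intro hsub _
          have has : a ∈ s := hsub (Finset.mem_insert_self a t)
          obtain ⟨ha1, _, hadvd, _⟩ := h a has
          have haadd : IsDAdd n k a α := hall a has
          rcases t.eq_empty_or_nonempty with rfl | htne
          · simp only [LawfulSingleton.insert_empty_eq, Finset.gcd_singleton, id_eq, normalize_eq]
            exact ⟨ha1, hadvd, haadd⟩
          · obtain ⟨hg1, hgd, hgadd⟩ :=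
              ih (fun x hx => hsub (Finset.mem_insert_of_mem hx)) htne
            rw [Finset.gcd_insert]
            have hgcd : GCDMonoid.gcd (id a) (t.gcd id) = Nat.gcd a (t.gcd id) := rfl
            rw [hgcd]
            refine ⟨Nat.gcd_pos_of_pos_left _ ha1,
              dvd_trans (Nat.gcd_dvd_left _ _) hadvd, ?_⟩
            exact key hk ha1 hadvd hg1 hgd haadd hgadd
      exact (aux s (subset_refl s) hs).2.2
    · intro hgcd e he
      obtain ⟨he1, hek, _, _⟩ := h e he
      have hdvd : s.gcd id ∣ e := Finset.gcd_dvd he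
      have hg1 : 1 ≤ s.gcd id := by
        rcases Nat.eq_zero_or_pos (s.gcd id) with h0 | h0
        · rw [h0] at hdvd
          rw [zero_dvd_iff] at hdvd
          omega
        · exact h0
      exact mono hg1 hdvd hek he1 hgcd
  refine ⟨fun α _ => main α, ?_⟩
  ext α
  simp only [Set.mem_iInter, Set.mem_setOf_eq]
  constructor
  · intro hA
    obtain ⟨e0, he0⟩ := hs
    exact ⟨(hA e0 he0).1, (main α).1 (fun e he => (hA e he).2)⟩
  · rintro ⟨hX, hD⟩ e he
    exact ⟨hX, (main α).2 hD e he⟩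
end

section
/- Let 1 ≤ k < n+1 be integers and D = gcd(k+1, n+2). Then the set of divisors of (k,n) equals { (k+1)x/D : x is a positive divisor of D }. -/
/-- With `D = gcd(k+1, n+2)`, the set of divisors of `(k,n)` equals
`{ (k+1)·x/D : x a positive divisor of D }`. -/
theorem stmt8 (n k : ℕ) (hk : 1 ≤ k) (hkn : k < n + 1) :
    {d : ℕ | IsDivOf n k d} =
      {e : ℕ | ∃ x : ℕ, 0 < x ∧ x ∣ Nat.gcd (k + 1) (n + 2) ∧
        e = (k + 1) * x / Nat.gcd (k + 1) (n + 2)} := by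
  set D := Nat.gcd (k + 1) (n + 2) with hDdef
  have hD : 0 < D := Nat.gcd_pos_of_pos_left _ (Nat.succ_pos k)
  have hDk : D ∣ k + 1 := Nat.gcd_dvd_left _ _
  have hDn : D ∣ n + 2 := Nat.gcd_dvd_right _ _
  set m := (k + 1) / D with hmdef
  have hm : m * D = k + 1 := Nat.div_mul_cancel hDk
  have hm0 : 0 < m := by
    rcases Nat.eq_zero_or_pos m with h | h
    · simp [h] at hm
    · exact h
  ext d
  simp only [Set.mem_setOf_eq, IsDivOf]
  constructor
  · rintro ⟨h1, h2, hd, hdvd⟩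
    have hmd : m ∣ d := by
      have hcop : Nat.Coprime m ((n + 2) / D) := Nat.coprime_div_gcd_div_gcd hD
      have h' : m * D ∣ d * ((n + 2) / D) * D := by
        rw [hm, mul_assoc, Nat.div_mul_cancel hDn]; exact hdvd
      have : m ∣ d * ((n + 2) / D) := (Nat.mul_dvd_mul_iff_right hD).mp h'
      exact hcop.dvd_of_dvd_mul_right this
    obtain ⟨c, hc⟩ := hmd
    have hcD : c ∣ D := by
      have : m * c ∣ m * D := by rw [hm, ← hc]; exact hd
      exact (Nat.mul_dvd_mul_iff_left hm0).mp this
    have hc0 : 0 < c := by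
      rcases Nat.eq_zero_or_pos c with h | h
      · rw [h, mul_zero] at hc; omega
      · exact h
    refine ⟨c, hc0, hcD, ?_⟩
    rw [hc, ← hm]
    rw [show m * D * c = m * c * D by ring, Nat.mul_div_cancel _ hD]
  · rintro ⟨x, hx0, hxD, he⟩
    have hed : d = m * x := by
      rw [he, ← hm, show m * D * x = m * x * D by ring, Nat.mul_div_cancel _ hD]
    have hdk : d ∣ k + 1 := by
      rw [hed, ← hm]; exact Nat.mul_dvd_mul_left m hxD
    refine ⟨hed ▸ Nat.mul_pos hm0 hx0, Nat.le_of_dvd (Nat.succ_pos k) hdk, hdk, ?_⟩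
    rw [hed, ← hm, mul_assoc]
    exact Nat.mul_dvd_mul_left m (Dvd.dvd.mul_left hDn x)
end

section
/- Let 1 ≤ k < n+1 be integers and let d be a divisor of (k,n). Then the number of sequences α ∈ X_n^k with α(0) = 0 and period P(α) = d equals the sum over all subsets B ⊆ PD_d of (-1)^{|B|} · C( (d/∏_{p∈B} p)·(n+2)/(k+1) − 1, (d/∏_{p∈B} p) − 1 ), where the empty product is 1. -/
/-- The period of `α`: the minimal divisor `d` of `(k,n)` such that `α` is `d`-additive. -/
noncomputable def period (n k : ℕ) (α : ℕ → ℕ) : ℕ :=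
  sInf {d : ℕ | IsDivOf n k d ∧ IsDAdd n k d α}

open scoped Classical in
/-- `PD_d` as a finset: the primes `p` with `p ∣ d` and `d/p` a divisor of `(k,n)`. -/
noncomputable def PDfinset (n k d : ℕ) : Finset ℕ :=
  (Finset.range (d + 1)).filter (fun p => p.Prime ∧ p ∣ d ∧ IsDivOf n k (d / p))

namespace Stmt10Aux


/-- simplified additivity -/
def AddOn (k e v : ℕ) (α : ℕ → ℕ) : Prop := ∀ j, j + e ≤ k → α (j + e) = α j + v

def vv (n k e : ℕ) : ℕ := e * (n + 1 - k) / (k + 1)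

variable {n k : ℕ}

lemma vv_spec (hkn : k < n + 1) {e : ℕ} (he : IsDivOf n k e) :
    (k + 1) * vv n k e = e * (n + 1 - k) := by
  obtain ⟨-, -, -, hdvd⟩ := he
  have h2 : e * (n + 2) = e * (k + 1) + e * (n + 1 - k) := by
    have h3 : n + 2 = (k + 1) + (n + 1 - k) := by omega
    rw [h3, Nat.mul_add]
  have hdvd' : (k + 1) ∣ e * (n + 1 - k) := by
    rw [h2] at hdvd
    exact (Nat.dvd_add_right (dvd_mul_left (k+1) e)).mp hdvd
  exact Nat.mul_div_cancel' hdvd' 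

lemma vv_eq_of_dvd (hkn : k < n + 1) {e f : ℕ} (he : IsDivOf n k e) (hf : IsDivOf n k f)
    (hef : e ∣ f) : vv n k f = (f / e) * vv n k e := by
  have h1 : (k + 1) * vv n k f = (k + 1) * ((f / e) * vv n k e) := by
    rw [vv_spec hkn hf]
    calc f * (n + 1 - k) = (f / e) * (e * (n + 1 - k)) := by
          rw [← Nat.mul_assoc, Nat.div_mul_cancel hef]
      _ = (f / e) * ((k + 1) * vv n k e) := by rw [vv_spec hkn he]
      _ = (k + 1) * ((f / e) * vv n k e) := by ring
  exact Nat.eq_of_mul_eq_mul_left (by omega) h1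

lemma dadd_iff (hkn : k < n + 1) {e : ℕ} (he : IsDivOf n k e) {α : ℕ → ℕ} (h0 : α 0 = 0) :
    IsDAdd n k e α ↔ AddOn k e (vv n k e) α := by
  rcases eq_or_ne e (k + 1) with heq | hne
  · rw [IsDAdd, if_pos heq]
    constructor
    · intro _ j hj
      exact absurd hj (by omega)
    · intro _
      exact h0
  · have hek : e ≤ k := by have := he.2.1; omega
    rw [IsDAdd, if_neg hne]
    constructor
    · rintro ⟨hv, hadd⟩
      have hαe : α e = vv n k e := by
        refine Nat.eq_of_mul_eq_mul_left (show 0 < k + 1 by omega) ?_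
        rw [hv]
        exact (vv_spec hkn he).symm
      intro j hj
      have := hadd 1 j (by omega)
      simpa [hαe] using this
    · intro h
      have hαe : α e = vv n k e := by
        have := h 0 (by omega)
        simpa [h0] using this
      constructor
      · rw [hαe]; exact vv_spec hkn he
      · intro i
        induction i with
        | zero => simp
        | succ i ih =>
          intro j hj
          rw [Nat.succ_mul] at hj ⊢
          rw [← Nat.add_assoc]
          have h1 := h (j + i * e) (by omega)
          have h2 := ih j (by omega)
          rw [h1, h2, hαe]
          ring

lemma addOn_iter {e v : ℕ} {α : ℕ → ℕ} (h : AddOn k e v α) :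
    ∀ c j, j + c * e ≤ k → α (j + c * e) = α j + c * v := by
  intro c
  induction c with
  | zero => simp
  | succ c ih =>
    intro j hj
    rw [Nat.succ_mul] at hj ⊢
    rw [← Nat.add_assoc]
    have h1 := h (j + c * e) (by omega)
    have h2 := ih j (by omega)
    rw [h1, h2]
    ring

lemma addOn_of_dvd (hkn : k < n + 1) {e f : ℕ} {α : ℕ → ℕ} (he : IsDivOf n k e)
    (hf : IsDivOf n k f) (hef : e ∣ f) (h : AddOn k e (vv n k e) α) :
    AddOn k f (vv n k f) α := by
  intro j hj
  have hfe : f = (f / e) * e := (Nat.div_mul_cancel hef).symm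
  rw [vv_eq_of_dvd hkn he hf hef]
  calc α (j + f) = α (j + (f / e) * e) := by rw [← hfe]
    _ = α j + (f / e) * vv n k e := addOn_iter h (f / e) j (by rw [← hfe]; exact hj)

def wrapG (n k : ℕ) (α : ℕ → ℕ) (j : ℕ) : ℤ :=
  ((k : ℤ) + 1) * α (j % (k + 1)) - (j % (k + 1) : ℕ) * ((n + 1 - k : ℕ) : ℤ)

lemma wrap_per (hkn : k < n + 1) {e v : ℕ} {α : ℕ → ℕ} (heK : e ∣ k + 1)
    (h : AddOn k e v α) (hv : (k + 1) * v = e * (n + 1 - k)) :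
    ∀ j, wrapG n k α (j + e) = wrapG n k α j := by
  intro j
  obtain ⟨a, ha⟩ := heK
  have he1 : 1 ≤ e := by
    rcases Nat.eq_zero_or_pos e with h0 | h1
    · subst h0; simp at ha
    · exact h1
  have ha1 : 1 ≤ a := by
    rcases Nat.eq_zero_or_pos a with h0 | h1
    · subst h0; simp at ha
    · exact h1
  have he_le : e ≤ k + 1 := Nat.le_of_dvd (by omega) ⟨a, ha⟩
  set r := j % (k + 1) with hr
  have hrK : r < k + 1 := Nat.mod_lt _ (by omega)
  have hmod : (j + e) % (k + 1) = (r + e) % (k + 1) := by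
    rw [Nat.add_mod j e, Nat.add_mod r e, Nat.mod_eq_of_lt hrK]
  have hv' : ((k : ℤ) + 1) * v = (e : ℤ) * ((n + 1 - k : ℕ) : ℤ) := by exact_mod_cast hv
  by_cases hcase : r + e < k + 1
  · have hmod2 : (j + e) % (k + 1) = r + e := by rw [hmod, Nat.mod_eq_of_lt hcase]
    have hα : α (r + e) = α r + v := h r (by omega)
    rw [wrapG, wrapG, hmod2, ← hr, hα]
    push_cast
    linear_combination hv'
  · -- r + e ≥ k + 1
    have hle : k + 1 ≤ r + e := by omega
    have hmod2 : (j + e) % (k + 1) = r + e - (k + 1) := by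
      rw [hmod, Nat.mod_eq_sub_mod hle, Nat.mod_eq_of_lt (by omega)]
    set j0 := r + e - (k + 1) with hj0
    have hsub : (a - 1) * e = a * e - e := by rw [Nat.sub_mul, one_mul]
    have hae : e * a = k + 1 := ha.symm
    have hae' : a * e = k + 1 := by rw [Nat.mul_comm]; exact hae
    have hrj0 : r = j0 + (a - 1) * e := by omega
    have hα : α r = α j0 + (a - 1) * v := by
      rw [hrj0]
      exact addOn_iter h (a - 1) j0 (by omega)
    rw [wrapG, wrapG, hmod2, ← hr]
    have hα' : (α r : ℤ) = (α j0 : ℤ) + ((a - 1 : ℕ) : ℤ) * v := by exact_mod_cast hα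
    have hrj0' : (r : ℤ) = (j0 : ℤ) + ((a - 1 : ℕ) : ℤ) * e := by exact_mod_cast hrj0
    push_cast
    linear_combination (-((k : ℤ) + 1)) * hα' + ((n + 1 - k : ℕ) : ℤ) * hrj0' - ((a - 1 : ℕ) : ℤ) * hv'

lemma per_iter {G : ℕ → ℤ} {p : ℕ} (hp : ∀ j, G (j + p) = G j) :
    ∀ c j, G (j + c * p) = G j := by
  intro c
  induction c with
  | zero => simp
  | succ c ih =>
    intro j
    rw [Nat.succ_mul, ← Nat.add_assoc, hp (j + c * p), ih j]

lemma per_gcd {G : ℕ → ℤ} :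
    ∀ p q : ℕ, (∀ j, G (j + p) = G j) → (∀ j, G (j + q) = G j) →
      ∀ j, G (j + Nat.gcd p q) = G j := by
  intro p q
  induction p, q using Nat.gcd.induction with
  | H0 q =>
    intro _ hq j
    simpa using hq j
  | H1 p q hp ih =>
    intro h1 h2 j
    rw [Nat.gcd_rec]
    refine ih ?_ h1 j
    intro i
    calc G (i + q % p) = G (i + q % p + q / p * p) := (per_iter h1 (q / p) (i + q % p)).symm
      _ = G (i + q) := by rw [Nat.add_assoc, Nat.mod_add_div']
      _ = G i := h2 i

lemma addOn_gcd (hkn : k < n + 1) {e1 e2 : ℕ} {α : ℕ → ℕ} (h0 : α 0 = 0)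
    (he1 : IsDivOf n k e1) (he2 : IsDivOf n k e2)
    (H1 : AddOn k e1 (vv n k e1) α) (H2 : AddOn k e2 (vv n k e2) α) :
    IsDivOf n k (Nat.gcd e1 e2) ∧ AddOn k (Nat.gcd e1 e2) (vv n k (Nat.gcd e1 e2)) α := by
  set g := Nat.gcd e1 e2 with hg
  have hg1 : 1 ≤ g := Nat.gcd_pos_of_pos_left e2 he1.1
  have hgk : g ∣ k + 1 := dvd_trans (Nat.gcd_dvd_left _ _) he1.2.2.1
  have hgm : (k + 1) ∣ g * (n + 2) := by
    have := Nat.dvd_gcd he1.2.2.2 he2.2.2.2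
    rwa [Nat.gcd_mul_right] at this
  have hgle : g ≤ k + 1 := Nat.le_of_dvd (Nat.succ_pos k) hgk
  have hgD : IsDivOf n k g := ⟨hg1, hgle, hgk, hgm⟩
  refine ⟨hgD, ?_⟩
  have w1 := wrap_per hkn he1.2.2.1 H1 (vv_spec hkn he1)
  have w2 := wrap_per hkn he2.2.2.1 H2 (vv_spec hkn he2)
  have wg := per_gcd e1 e2 w1 w2
  intro j hj
  have hgoal := wg j
  have hj1 : j % (k + 1) = j := Nat.mod_eq_of_lt (by omega)
  have hj2 : (j + g) % (k + 1) = j + g := Nat.mod_eq_of_lt (by omega)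
  rw [wrapG, wrapG, hj1, hj2] at hgoal
  have hvg : (k + 1) * vv n k g = g * (n + 1 - k) := vv_spec hkn hgD
  have hvg' : ((k : ℤ) + 1) * (vv n k g) = (g : ℤ) * ((n + 1 - k : ℕ) : ℤ) := by exact_mod_cast hvg
  have key : ((k : ℤ) + 1) * (α (j + g) : ℤ) = ((k : ℤ) + 1) * ((α j : ℤ) + (vv n k g : ℤ)) := by
    push_cast at hgoal ⊢
    linear_combination hgoal - hvg'
  have key2 : (α (j + g) : ℤ) = (α j : ℤ) + (vv n k g : ℤ) :=
    mul_left_cancel₀ (by positivity) key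
  exact_mod_cast key2



lemma strictMono_fin_step {t N : ℕ} {g : Fin t → Fin N} (hg : StrictMono g) :
    ∀ c (i j : Fin t), (j : ℕ) = (i : ℕ) + c → (g i : ℕ) + c ≤ (g j : ℕ) := by
  intro c
  induction c with
  | zero =>
    intro i j hij
    have : i = j := Fin.ext (by omega)
    subst this
    omega
  | succ c ih =>
    intro i j hij
    have hj' : (i : ℕ) + c < t := by have := j.2; omega
    have h1 := ih i ⟨(i : ℕ) + c, hj'⟩ rfl
    have h2 : (⟨(i : ℕ) + c, hj'⟩ : Fin t) < j := by
      rw [Fin.lt_iff_val_lt_val]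
      simp only
      omega
    have h3 := hg h2
    rw [Fin.lt_iff_val_lt_val] at h3
    omega

def phiF {m t : ℕ} (f : Fin t → Fin (m + 1)) : Fin t → Fin (m + t) :=
  fun i => ⟨(f i : ℕ) + i, by have := (f i).2; have := i.2; omega⟩

lemma phiF_strictMono {m t : ℕ} {f : Fin t → Fin (m + 1)} (hf : Monotone f) :
    StrictMono (phiF f) := by
  intro i j hij
  have h1 : (f i : ℕ) ≤ (f j : ℕ) := hf (le_of_lt hij)
  have h2 : (i : ℕ) < (j : ℕ) := hij
  simp only [phiF, Fin.lt_iff_val_lt_val]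
  omega

def phiS {m t : ℕ} (f : Fin t → Fin (m + 1)) : Finset (Fin (m + t)) :=
  Finset.image (phiF f) Finset.univ

lemma phiS_card {m t : ℕ} {f : Fin t → Fin (m + 1)} (hf : Monotone f) :
    (phiS f).card = t := by
  rw [phiS, Finset.card_image_of_injective _ (phiF_strictMono hf).injective, Finset.card_univ,
    Fintype.card_fin]

lemma embBound {m t : ℕ} (g : Fin t ↪o Fin (m + t)) (i : Fin t) : (g i : ℕ) ≤ m + (i : ℕ) := by
  have hsm : StrictMono g := OrderEmbedding.strictMono g
  have hlast : (t : ℕ) - 1 < t := by have := i.2; omega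
  have h1 := strictMono_fin_step hsm ((t - 1) - (i : ℕ)) i ⟨t - 1, hlast⟩
    (by simp only; have := i.2; omega)
  have h2 : (g ⟨t - 1, hlast⟩ : ℕ) < m + t := (g ⟨t - 1, hlast⟩).2
  have := i.2
  omega

lemma embGe {m t : ℕ} (g : Fin t ↪o Fin (m + t)) (i : Fin t) : (i : ℕ) ≤ (g i : ℕ) := by
  have hsm : StrictMono g := OrderEmbedding.strictMono g
  have h0t : 0 < t := by have := i.2; omega
  have h2 := strictMono_fin_step hsm (i : ℕ) ⟨0, h0t⟩ i (by simp)
  omega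

def psiF {m t : ℕ} (s : Finset (Fin (m + t))) (hs : s.card = t) : Fin t → Fin (m + 1) :=
  fun i => ⟨(s.orderEmbOfFin hs i : ℕ) - (i : ℕ), by
    have h1 := embBound (s.orderEmbOfFin hs) i
    omega⟩

lemma psiF_monotone {m t : ℕ} (s : Finset (Fin (m + t))) (hs : s.card = t) :
    Monotone (psiF s hs) := by
  intro i j hij
  have hsm : StrictMono (s.orderEmbOfFin hs) := OrderEmbedding.strictMono _
  have h1 := strictMono_fin_step hsm ((j : ℕ) - (i : ℕ)) i j (by have : (i:ℕ) ≤ j := hij; omega)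
  have h2 := embGe (s.orderEmbOfFin hs) i
  simp only [psiF, Fin.le_iff_val_le_val]
  omega

lemma psi_phi {m t : ℕ} (f : Fin t → Fin (m + 1)) (hf : Monotone f) :
    psiF (phiS f) (phiS_card hf) = f := by
  have hemb : (OrderEmbedding.ofStrictMono (phiF f) (phiF_strictMono hf))
      = (phiS f).orderEmbOfFin (phiS_card hf) := by
    apply Finset.orderEmbOfFin_unique' (phiS_card hf)
    intro x
    exact Finset.mem_image_of_mem _ (Finset.mem_univ x)
  funext i
  apply Fin.ext
  simp only [psiF, ← hemb, OrderEmbedding.coe_ofStrictMono, phiF]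
  omega

lemma phi_psi {m t : ℕ} (s : Finset (Fin (m + t))) (hs : s.card = t) :
    phiS (psiF s hs) = s := by
  have hsm : StrictMono (s.orderEmbOfFin hs) := OrderEmbedding.strictMono _
  have himg : ∀ i : Fin t, phiF (psiF s hs) i = s.orderEmbOfFin hs i := by
    intro i
    apply Fin.ext
    have := embGe (s.orderEmbOfFin hs) i
    simp only [phiF, psiF]
    omega
  calc phiS (psiF s hs) = Finset.image (fun i => s.orderEmbOfFin hs i) Finset.univ := by
        rw [phiS]
        apply Finset.image_congr
        intro i _
        exact himg i
    _ = s := by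
        apply Finset.eq_of_subset_of_card_le
        · intro x hx
          simp only [Finset.mem_image] at hx
          obtain ⟨i, _, rfl⟩ := hx
          exact Finset.orderEmbOfFin_mem s hs i
        · rw [Finset.card_image_of_injective _ hsm.injective, Finset.card_univ,
            Fintype.card_fin, hs]

lemma card_monotone (m t : ℕ) :
    Nat.card {f : Fin t → Fin (m + 1) // Monotone f} = (m + t).choose t := by
  classical
  have key : {f : Fin t → Fin (m + 1) // Monotone f} ≃ {s : Finset (Fin (m + t)) // s.card = t} :=
    ⟨fun a => ⟨phiS a.1, phiS_card a.2⟩, fun b => ⟨psiF b.1 b.2, psiF_monotone b.1 b.2⟩,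
      fun a => Subtype.ext (psi_phi a.1 a.2), fun b => Subtype.ext (phi_psi b.1 b.2)⟩
  rw [Nat.card_congr key, Nat.card_eq_fintype_card, Fintype.card_finset_len, Fintype.card_fin]



variable {n k : ℕ}

def invB (n k e : ℕ) (f : Fin (e - 1) → Fin (vv n k e + 1)) (r : ℕ) : ℕ :=
  if h : 1 ≤ r ∧ r < e then (f ⟨r - 1, by omega⟩ : ℕ) else 0

def invA (n k e : ℕ) (f : Fin (e - 1) → Fin (vv n k e + 1)) (j : ℕ) : ℕ :=
  if j ≤ k then (j / e) * vv n k e + invB n k e f (j % e) else 0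

lemma invB_le {e : ℕ} (f : Fin (e - 1) → Fin (vv n k e + 1)) (r : ℕ) :
    invB n k e f r ≤ vv n k e := by
  rw [invB]
  split
  · exact Nat.lt_succ_iff.mp (f _).2
  · omega

lemma invB_zero {e : ℕ} (f : Fin (e - 1) → Fin (vv n k e + 1)) : invB n k e f 0 = 0 := by
  rw [invB, dif_neg (by omega)]

lemma invB_mono {e : ℕ} {f : Fin (e - 1) → Fin (vv n k e + 1)} (hf : Monotone f)
    {r r' : ℕ} (h1 : r ≤ r') (h2 : r' < e) : invB n k e f r ≤ invB n k e f r' := by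
  rcases Nat.eq_zero_or_pos r with h0 | h0
  · rw [h0, invB_zero]; omega
  · rw [invB, dif_pos ⟨h0, by omega⟩, invB, dif_pos ⟨by omega, h2⟩]
    exact hf (by simp only [Fin.mk_le_mk]; omega)

lemma mono_of_step {β : ℕ → ℕ} {k : ℕ} (h : ∀ j, j + 1 ≤ k → β j ≤ β (j + 1)) :
    ∀ i j, i ≤ j → j ≤ k → β i ≤ β j := by
  suffices H : ∀ c i, i + c ≤ k → β i ≤ β (i + c) by
    intro i j hij hjk
    have := H (j - i) i (by omega)
    rwa [show i + (j - i) = j by omega] at this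
  intro c
  induction c with
  | zero => intro i _; simp
  | succ c ih =>
    intro i hi
    calc β i ≤ β (i + c) := ih i (by omega)
      _ ≤ β (i + c + 1) := h (i + c) (by omega)
      _ = β (i + (c + 1)) := by rw [Nat.add_assoc]

lemma invA_spec (hkn : k < n + 1) {e : ℕ} (he : IsDivOf n k e)
    {f : Fin (e - 1) → Fin (vv n k e + 1)} (hf : Monotone f) :
    IsXseq n k (invA n k e f) ∧ invA n k e f 0 = 0 ∧ IsDAdd n k e (invA n k e f) := by
  have he1 : 1 ≤ e := he.1
  have hek1 : e ≤ k + 1 := he.2.1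
  have h0 : invA n k e f 0 = 0 := by
    rw [invA, if_pos (Nat.zero_le k), Nat.zero_div, Nat.zero_mod, invB_zero]
    simp
  have hstep : ∀ j, j + 1 ≤ k → invA n k e f j ≤ invA n k e f (j + 1) := by
    intro j hj
    have hjk : j ≤ k := by omega
    rw [invA, if_pos hjk, invA, if_pos hj]
    have hr : j % e < e := Nat.mod_lt _ (by omega)
    have hrepr : j = j % e + j / e * e := (Nat.mod_add_div' j e).symm
    by_cases hc : j % e + 1 < e
    · have hj1 : j + 1 = (j % e + 1) + j / e * e := by omega
      have hdiv : (j + 1) / e = j / e := by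
        rw [hj1, Nat.add_mul_div_right _ _ (by omega : 0 < e), Nat.div_eq_of_lt hc, Nat.zero_add]
      have hmod : (j + 1) % e = j % e + 1 := by
        rw [hj1, Nat.add_mul_mod_self_right, Nat.mod_eq_of_lt hc]
      rw [hdiv, hmod]
      exact Nat.add_le_add_left (invB_mono hf (Nat.le_succ _) hc) _
    · have hre : j % e + 1 = e := by omega
      have hj1 : j + 1 = (j / e + 1) * e := by rw [Nat.succ_mul]; omega
      have hdiv : (j + 1) / e = j / e + 1 := by
        rw [hj1, Nat.mul_div_cancel _ (by omega : 0 < e)]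
      have hmod : (j + 1) % e = 0 := by rw [hj1, Nat.mul_mod_left]
      rw [hdiv, hmod, invB_zero]
      have h1 := invB_le f (j % e)
      have h2 : (j / e + 1) * vv n k e = j / e * vv n k e + vv n k e := Nat.succ_mul _ _
      omega
  obtain ⟨a, ha⟩ := he.2.2.1
  have ha' : a * e = k + 1 := by rw [Nat.mul_comm]; omega
  have ha1 : 1 ≤ a := by
    rcases Nat.eq_zero_or_pos a with h00 | h01
    · subst h00; simp at ha'
    · exact h01
  have hsub : (a - 1) * e = a * e - e := by rw [Nat.sub_mul, one_mul]
  have hk_eq : k = (e - 1) + (a - 1) * e := by omega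
  have hXk : invA n k e f k ≤ n + 1 - k := by
    have hdiv : k / e = a - 1 := by
      conv_lhs => rw [hk_eq]
      rw [Nat.add_mul_div_right _ _ (by omega : 0 < e), Nat.div_eq_of_lt (by omega), Nat.zero_add]
    have hmod : k % e = e - 1 := by
      conv_lhs => rw [hk_eq]
      rw [Nat.add_mul_mod_self_right, Nat.mod_eq_of_lt (by omega)]
    rw [invA, if_pos (le_refl k), hdiv, hmod]
    have h1 := invB_le f (e - 1)
    have h2 : (a - 1) * vv n k e = a * vv n k e - vv n k e := by rw [Nat.sub_mul, one_mul]
    have h3 : vv n k e ≤ a * vv n k e := Nat.le_mul_of_pos_left _ ha1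
    have h4 : a * vv n k e = n + 1 - k := by
      refine Nat.eq_of_mul_eq_mul_left (by omega : 0 < e) ?_
      calc e * (a * vv n k e) = (e * a) * vv n k e := by ring
        _ = (k + 1) * vv n k e := by rw [ha]
        _ = e * (n + 1 - k) := vv_spec hkn he
    omega
  have hAdd : AddOn k e (vv n k e) (invA n k e f) := by
    intro j hj
    have hdiv : (j + e) / e = j / e + 1 := Nat.add_div_right j (by omega)
    have hmod : (j + e) % e = j % e := Nat.add_mod_right j e
    rw [invA, if_pos hj, invA, if_pos (by omega), hdiv, hmod]
    have h2 : (j / e + 1) * vv n k e = j / e * vv n k e + vv n k e := Nat.succ_mul _ _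
    omega
  exact ⟨⟨mono_of_step hstep, hXk, fun i hi => by rw [invA, if_neg (by omega)]⟩, h0,
    (dadd_iff hkn he h0).mpr hAdd⟩

lemma fwd_bound (hkn : k < n + 1) {e : ℕ} (he : IsDivOf n k e) {α : ℕ → ℕ}
    (hX : IsXseq n k α) (h0 : α 0 = 0) (hD : IsDAdd n k e α) :
    ∀ j, j ≤ e - 1 → α j ≤ vv n k e := by
  intro j hj
  have hA := (dadd_iff hkn he h0).mp hD
  have he1 : 1 ≤ e := he.1
  have hek1 : e ≤ k + 1 := he.2.1
  have h1 : α j ≤ α (e - 1) := hX.1 j (e - 1) hj (by omega)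
  rcases eq_or_ne e (k + 1) with heq | hne
  · have hv : (k + 1) * vv n k e = e * (n + 1 - k) := vv_spec hkn he
    have hv' : (k + 1) * vv n k e = (k + 1) * (n + 1 - k) := by rw [hv, heq]
    have hveq : vv n k e = n + 1 - k := Nat.eq_of_mul_eq_mul_left (Nat.succ_pos k) hv'
    have h2 : e - 1 = k := by omega
    rw [h2] at h1
    have := hX.2.1
    omega
  · have hek : e ≤ k := by omega
    have h2 : α (e - 1) ≤ α e := hX.1 (e - 1) e (by omega) hek
    have h3 : α e = vv n k e := by
      have := hA 0 (by omega)
      simpa [h0] using this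
    omega

lemma card_dadd (hkn : k < n + 1) {e : ℕ} (he : IsDivOf n k e) :
    Nat.card {α : ℕ → ℕ // IsXseq n k α ∧ α 0 = 0 ∧ IsDAdd n k e α}
      = (vv n k e + (e - 1)).choose (e - 1) := by
  have he1 : 1 ≤ e := he.1
  have hek1 : e ≤ k + 1 := he.2.1
  have key : {α : ℕ → ℕ // IsXseq n k α ∧ α 0 = 0 ∧ IsDAdd n k e α}
      ≃ {f : Fin (e - 1) → Fin (vv n k e + 1) // Monotone f} := by
    refine ⟨fun a => ⟨fun i => ⟨a.1 ((i : ℕ) + 1),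
        Nat.lt_succ_of_le (fwd_bound hkn he a.2.1 a.2.2.1 a.2.2.2 _ (by have := i.2; omega))⟩, ?_⟩,
      fun b => ⟨invA n k e b.1, (invA_spec hkn he b.2).1, (invA_spec hkn he b.2).2.1,
        (invA_spec hkn he b.2).2.2⟩, ?_, ?_⟩
    · intro i j hij
      have hij' : (i : ℕ) ≤ (j : ℕ) := hij
      have hj2 : (j : ℕ) < e - 1 := j.2
      exact a.2.1.1 ((i : ℕ) + 1) ((j : ℕ) + 1) (by omega) (by omega)
    · rintro ⟨α, hX, h0, hD⟩
      apply Subtype.ext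
      funext j
      simp only
      by_cases hjk : j ≤ k
      · rw [invA, if_pos hjk]
        have hA := (dadd_iff hkn he h0).mp hD
        have hrepr : α j = α (j % e) + (j / e) * vv n k e := by
          conv_lhs => rw [← Nat.mod_add_div' j e]
          exact addOn_iter hA (j / e) (j % e) (by rw [Nat.mod_add_div']; exact hjk)
        have hr : j % e < e := Nat.mod_lt _ (by omega)
        rcases Nat.eq_zero_or_pos (j % e) with h00 | h01
        · rw [h00, invB_zero, hrepr, h00, h0]
          omega
        · rw [invB, dif_pos ⟨h01, hr⟩]
          simp only
          have hiter : j % e - 1 + 1 = j % e := by omega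
          rw [hiter, hrepr]
          omega
      · rw [invA, if_neg hjk]
        exact (hX.2.2 j (by omega)).symm
    · rintro ⟨f, hf⟩
      apply Subtype.ext
      funext i
      apply Fin.ext
      simp only
      have hlt : (i : ℕ) + 1 < e := by have := i.2; omega
      rw [invA, if_pos (by omega), Nat.div_eq_of_lt hlt, Nat.mod_eq_of_lt hlt, invB,
        dif_pos ⟨by omega, hlt⟩]
      have hieq : (⟨(i : ℕ) + 1 - 1, by omega⟩ : Fin (e - 1)) = i := Fin.ext (by simp)
      rw [hieq]
      simp
  rw [Nat.card_congr key, card_monotone]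



def cval (n k : ℕ) : ℕ := (k + 1) / Nat.gcd (k + 1) (n + 2)

lemma dvd_c_iff (e : ℕ) : (k + 1) ∣ e * (n + 2) ↔ cval n k ∣ e := by
  set g0 := Nat.gcd (k + 1) (n + 2) with hg0def
  have hg0 : 0 < g0 := Nat.gcd_pos_of_pos_left _ (Nat.succ_pos k)
  have hc : cval n k * g0 = k + 1 := Nat.div_mul_cancel (Nat.gcd_dvd_left _ _)
  have hm : g0 * ((n + 2) / g0) = n + 2 := Nat.mul_div_cancel' (Nat.gcd_dvd_right _ _)
  have cop : Nat.Coprime (cval n k) ((n + 2) / g0) := Nat.coprime_div_gcd_div_gcd hg0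
  constructor
  · intro h
    rw [← hc, ← hm] at h
    have h2 : e * (g0 * ((n + 2) / g0)) = (e * ((n + 2) / g0)) * g0 := by ring
    rw [h2] at h
    have h3 : cval n k ∣ e * ((n + 2) / g0) :=
      (Nat.mul_dvd_mul_iff_right hg0).mp h
    exact cop.dvd_of_dvd_mul_right h3
  · intro h
    rw [← hc]
    calc cval n k * g0 ∣ e * g0 := Nat.mul_dvd_mul_right h g0
      _ ∣ e * (n + 2) := Nat.mul_dvd_mul_left e (Nat.gcd_dvd_right _ _)

lemma c_dvd_of_isDivOf {e : ℕ} (he : IsDivOf n k e) : cval n k ∣ e :=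
  (dvd_c_iff e).mp he.2.2.2

lemma isDivOf_of {e : ℕ} (h1 : 1 ≤ e) (h2 : e ∣ k + 1) (h3 : cval n k ∣ e) : IsDivOf n k e :=
  ⟨h1, Nat.le_of_dvd (Nat.succ_pos k) h2, h2, (dvd_c_iff e).mpr h3⟩

lemma mem_PD {d p : ℕ} (hd1 : 1 ≤ d) :
    p ∈ PDfinset n k d ↔ p.Prime ∧ p ∣ d ∧ IsDivOf n k (d / p) := by
  classical
  rw [PDfinset, Finset.mem_filter, Finset.mem_range]
  constructor
  · rintro ⟨-, h⟩; exact h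
  · intro h
    exact ⟨by have := Nat.le_of_dvd (show 0 < d by omega) h.2.1; omega, h⟩

lemma c_prod_dvd (hkn : k < n + 1) {d : ℕ} (hd : IsDivOf n k d) {B : Finset ℕ}
    (hB : B ⊆ PDfinset n k d) : cval n k * (∏ p ∈ B, p) ∣ d := by
  have hcpos : 0 < cval n k := by
    have := c_dvd_of_isDivOf hd
    rcases Nat.eq_zero_or_pos (cval n k) with h0 | h1
    · rw [h0] at this; simp at this; have := hd.1; omega
    · exact h1
  have hcd : cval n k ∣ d := c_dvd_of_isDivOf hd
  have hdive : ∀ p ∈ B, p ∣ d / cval n k := by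
    intro p hp
    have hpP := (mem_PD hd.1).mp (hB hp)
    have hcp : cval n k ∣ d / p := c_dvd_of_isDivOf hpP.2.2
    obtain ⟨u, hu⟩ := hcp
    have hdd : d = p * (d / p) := (Nat.mul_div_cancel' hpP.2.1).symm
    have h2 : d = cval n k * (p * u) := by rw [hdd, hu]; ring
    have h3 : d / cval n k = p * u := by rw [h2, Nat.mul_div_cancel_left _ hcpos]
    exact ⟨u, h3⟩
  have hprod : (∏ p ∈ B, p) ∣ d / cval n k := by
    refine Finset.prod_primes_dvd _ ?_ hdive
    intro p hp
    exact Nat.Prime.prime ((mem_PD hd.1).mp (hB hp)).1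
  have := mul_dvd_mul_left (cval n k) hprod
  rwa [Nat.mul_div_cancel' hcd] at this

lemma eB_isDivOf (hkn : k < n + 1) {d : ℕ} (hd : IsDivOf n k d) {B : Finset ℕ}
    (hB : B ⊆ PDfinset n k d) : IsDivOf n k (d / ∏ p ∈ B, p) := by
  set m := ∏ p ∈ B, p with hmdef
  have hcm : cval n k * m ∣ d := c_prod_dvd hkn hd hB
  have hmd : m ∣ d := dvd_trans (dvd_mul_left m (cval n k)) hcm
  have hm1 : 0 < m := by
    rcases Nat.eq_zero_or_pos m with h0 | h1
    · rw [h0] at hmd; simp at hmd; have := hd.1; omega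
    · exact h1
  obtain ⟨s, hs⟩ := hcm
  have hdm : d / m = cval n k * s := by
    rw [hs, show cval n k * m * s = (cval n k * s) * m by ring, Nat.mul_div_cancel _ hm1]
  refine isDivOf_of ?_ ?_ ?_
  · exact Nat.div_pos (Nat.le_of_dvd (by have := hd.1; omega) hmd) hm1
  · exact dvd_trans (Nat.div_dvd_of_dvd hmd) hd.2.2.1
  · rw [hdm]; exact dvd_mul_right _ s

lemma gcd_div_insert {d p : ℕ} {B : Finset ℕ} (hp : p.Prime) (hpB : p ∉ B)
    (hBprime : ∀ q ∈ B, Nat.Prime q) (hdvd : p * ∏ q ∈ B, q ∣ d) :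
    Nat.gcd (d / ∏ q ∈ B, q) (d / p) = d / (p * ∏ q ∈ B, q) := by
  set m := ∏ q ∈ B, q with hmdef
  obtain ⟨s, hs⟩ := hdvd
  have hm1 : 0 < m := by
    rw [hmdef]
    exact Finset.prod_pos (fun q hq => (hBprime q hq).pos)
  have hp1 : 0 < p := hp.pos
  have h1 : d / m = p * s := by
    rw [hs, show p * m * s = (p * s) * m by ring, Nat.mul_div_cancel _ hm1]
  have h2 : d / p = m * s := by
    rw [hs, show p * m * s = (m * s) * p by ring, Nat.mul_div_cancel _ hp1]
  have h3 : d / (p * m) = s := by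
    rw [hs, show p * m * s = s * (p * m) by ring, Nat.mul_div_cancel _ (by positivity)]
  have hcop : Nat.gcd p m = 1 := by
    have hnd : ¬ p ∣ m := by
      intro hdv
      obtain ⟨q, hqB, hq⟩ := (Nat.Prime.prime hp).exists_mem_finset_dvd hdv
      rw [Nat.prime_dvd_prime_iff_eq hp (hBprime q hqB)] at hq
      exact hpB (hq ▸ hqB)
    exact (Nat.Prime.coprime_iff_not_dvd hp).mpr hnd
  rw [h1, h2, h3, Nat.gcd_mul_right, hcop, one_mul]

lemma div_dvd_div' {a b N : ℕ} (ha : 0 < a) (hb : 0 < b) (hab : a ∣ b) (hbN : b ∣ N) :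
    N / b ∣ N / a := by
  obtain ⟨x, hx⟩ := hab
  obtain ⟨y, hy⟩ := hbN
  have h1 : N / a = x * y := by
    rw [hy, hx, show a * x * y = (x * y) * a by ring, Nat.mul_div_cancel _ ha]
  have h2 : N / b = y := by rw [hy, Nat.mul_div_cancel_left y hb]
  rw [h1, h2]
  exact dvd_mul_left y x

lemma inter_iff (hkn : k < n + 1) {d : ℕ} (hd : IsDivOf n k d) {B : Finset ℕ}
    (hB : B ⊆ PDfinset n k d) {α : ℕ → ℕ} (h0 : α 0 = 0) :
    (IsDAdd n k d α ∧ ∀ p ∈ B, IsDAdd n k (d / p) α) ↔ IsDAdd n k (d / ∏ p ∈ B, p) α := by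
  classical
  induction B using Finset.induction_on with
  | empty => simp
  | @insert p B' hpB' ih =>
    have hpmem : p ∈ PDfinset n k d := hB (Finset.mem_insert_self p B')
    have hB' : B' ⊆ PDfinset n k d := fun q hq => hB (Finset.mem_insert_of_mem hq)
    have hpP := (mem_PD hd.1).mp hpmem
    have hprod : ∏ q ∈ insert p B', q = p * ∏ q ∈ B', q := Finset.prod_insert hpB'
    have hBprime : ∀ q ∈ B', Nat.Prime q := fun q hq => ((mem_PD hd.1).mp (hB' hq)).1
    have hdvdIns : p * ∏ q ∈ B', q ∣ d := by
      have := c_prod_dvd hkn hd hB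
      rw [hprod] at this
      exact dvd_trans (dvd_mul_left _ (cval n k)) this
    have heNew : IsDivOf n k (d / ∏ q ∈ insert p B', q) := eB_isDivOf hkn hd hB
    have heB' : IsDivOf n k (d / ∏ q ∈ B', q) := eB_isDivOf hkn hd hB'
    have hgcd : Nat.gcd (d / ∏ q ∈ B', q) (d / p) = d / (p * ∏ q ∈ B', q) :=
      gcd_div_insert hpP.1 hpB' hBprime hdvdIns
    constructor
    · rintro ⟨hdadd, hall⟩
      have h1 : IsDAdd n k (d / ∏ q ∈ B', q) α :=
        (ih hB').mp ⟨hdadd, fun q hq => hall q (Finset.mem_insert_of_mem hq)⟩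
      have h2 : IsDAdd n k (d / p) α := hall p (Finset.mem_insert_self p B')
      have hg := addOn_gcd hkn h0 heB' hpP.2.2
        ((dadd_iff hkn heB' h0).mp h1) ((dadd_iff hkn hpP.2.2 h0).mp h2)
      rw [hgcd] at hg
      rw [hprod]
      exact (dadd_iff hkn (by rw [← hprod]; exact heNew) h0).mpr hg.2
    · intro hNew
      have hprodpos : 0 < ∏ q ∈ insert p B', q := by
        rw [hprod]
        exact Nat.mul_pos hpP.1.pos (Finset.prod_pos (fun q hq => (hBprime q hq).pos))
      have hNewAdd : AddOn k (d / ∏ q ∈ insert p B', q) (vv n k (d / ∏ q ∈ insert p B', q)) α :=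
        (dadd_iff hkn heNew h0).mp hNew
      have htrans : ∀ e : ℕ, IsDivOf n k e → (d / ∏ q ∈ insert p B', q) ∣ e →
          IsDAdd n k e α := by
        intro e he hdve
        exact (dadd_iff hkn he h0).mpr (addOn_of_dvd hkn heNew he hdve hNewAdd)
      have hprodd : (∏ q ∈ insert p B', q) ∣ d := by
        rw [hprod]; exact hdvdIns
      refine ⟨htrans d hd (Nat.div_dvd_of_dvd hprodd), ?_⟩
      intro q hq
      have hqmem := hB hq
      have hqP := (mem_PD hd.1).mp hqmem
      refine htrans (d / q) hqP.2.2 ?_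
      exact div_dvd_div' hqP.1.pos hprodpos (Finset.dvd_prod_of_mem _ hq) hprodd

lemma topmem {α : ℕ → ℕ} (h0 : α 0 = 0) :
    IsDivOf n k (k + 1) ∧ IsDAdd n k (k + 1) α := by
  refine ⟨⟨by omega, le_refl _, dvd_refl _, dvd_mul_right _ _⟩, ?_⟩
  rw [IsDAdd, if_pos rfl]
  exact h0

lemma period_spec {α : ℕ → ℕ} (h0 : α 0 = 0) :
    IsDivOf n k (period n k α) ∧ IsDAdd n k (period n k α) α := by
  unfold period
  have hne : {d : ℕ | IsDivOf n k d ∧ IsDAdd n k d α}.Nonempty :=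
    ⟨k + 1, topmem (n := n) (k := k) h0⟩
  exact Nat.sInf_mem hne

lemma period_le {α : ℕ → ℕ} {e : ℕ} (hmem : IsDivOf n k e ∧ IsDAdd n k e α) :
    period n k α ≤ e := by
  unfold period
  exact Nat.sInf_le hmem

lemma period_dvd (hkn : k < n + 1) {α : ℕ → ℕ} (h0 : α 0 = 0) {e : ℕ}
    (he : IsDivOf n k e) (hadd : IsDAdd n k e α) : period n k α ∣ e := by
  obtain ⟨hPD, hPadd⟩ := period_spec h0
  have hg := addOn_gcd hkn h0 hPD he
    ((dadd_iff hkn hPD h0).mp hPadd) ((dadd_iff hkn he h0).mp hadd)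
  have hmem : IsDivOf n k (Nat.gcd (period n k α) e) ∧ IsDAdd n k (Nat.gcd (period n k α) e) α :=
    ⟨hg.1, (dadd_iff hkn hg.1 h0).mpr hg.2⟩
  have h1 : period n k α ≤ Nat.gcd (period n k α) e := period_le hmem
  have h2 : Nat.gcd (period n k α) e ≤ period n k α := Nat.gcd_le_left e hPD.1
  have h3 : Nat.gcd (period n k α) e = period n k α := by omega
  rw [← h3]
  exact Nat.gcd_dvd_right _ e

lemma period_eq_iff (hkn : k < n + 1) {d : ℕ} (hd : IsDivOf n k d) {α : ℕ → ℕ} (h0 : α 0 = 0) :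
    period n k α = d ↔ IsDAdd n k d α ∧ ∀ p ∈ PDfinset n k d, ¬ IsDAdd n k (d / p) α := by
  constructor
  · intro hper
    obtain ⟨hPD, hPadd⟩ := period_spec (α := α) h0
    rw [hper] at hPadd
    refine ⟨hPadd, ?_⟩
    intro p hp hcontra
    have hpP := (mem_PD hd.1).mp hp
    have hle : period n k α ≤ d / p := period_le ⟨hpP.2.2, hcontra⟩
    have hlt : d / p < d := Nat.div_lt_self (by have := hd.1; omega) hpP.1.one_lt
    omega
  · rintro ⟨hdadd, hnone⟩
    have hle := period_le ⟨hd, hdadd⟩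
    have hdvd := period_dvd hkn h0 hd hdadd
    obtain ⟨hPD, hPadd⟩ := period_spec (α := α) h0
    by_contra hne
    have hPlt : period n k α < d := lt_of_le_of_ne hle hne
    obtain ⟨t, ht⟩ := hdvd
    have hP1 : 1 ≤ period n k α := hPD.1
    have ht1 : t ≠ 1 := by intro h; rw [h, Nat.mul_one] at ht; omega
    obtain ⟨p, hpprime, hpt⟩ := Nat.exists_prime_and_dvd ht1
    obtain ⟨u, hu⟩ := hpt
    have hu0 : u ≠ 0 := by
      intro h
      rw [h, Nat.mul_zero] at hu
      rw [hu, Nat.mul_zero] at ht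
      have := hd.1
      omega
    have hpd : p ∣ d := by rw [ht, hu]; exact ⟨period n k α * u, by ring⟩
    have hdp : d / p = period n k α * u := by
      rw [ht, hu, show period n k α * (p * u) = (period n k α * u) * p by ring,
        Nat.mul_div_cancel _ hpprime.pos]
    have hPdp : period n k α ∣ d / p := by rw [hdp]; exact dvd_mul_right _ u
    have hdp1 : 1 ≤ d / p := by
      rw [hdp]
      have : 1 ≤ u := by omega
      exact Nat.mul_pos (by omega) (by omega)
    have hdpD : IsDivOf n k (d / p) :=
      isDivOf_of hdp1 (dvd_trans (Nat.div_dvd_of_dvd hpd) hd.2.2.1)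
        (dvd_trans (c_dvd_of_isDivOf hPD) hPdp)
    have hdpadd : IsDAdd n k (d / p) α :=
      (dadd_iff hkn hdpD h0).mpr
        (addOn_of_dvd hkn hPD hdpD hPdp ((dadd_iff hkn hPD h0).mp hPadd))
    have hpPD : p ∈ PDfinset n k d := (mem_PD hd.1).mpr ⟨hpprime, hpd, hdpD⟩
    exact hnone p hpPD hdpadd

lemma choose_arg_eq (hkn : k < n + 1) {e : ℕ} (he : IsDivOf n k e) :
    e * (n + 2) / (k + 1) - 1 = vv n k e + (e - 1) := by
  have hv := vv_spec hkn he
  have he1 := he.1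
  have h3 : e * (n + 2) = (k + 1) * (e + vv n k e) := by
    have h4 : n + 2 = (k + 1) + (n + 1 - k) := by omega
    rw [h4, Nat.mul_add, Nat.mul_add, ← hv]
    ring
  have h5 : e * (n + 2) / (k + 1) = e + vv n k e := by
    rw [h3, Nat.mul_div_cancel_left _ (Nat.succ_pos k)]
  omega


lemma xseq_finite (hkn : k < n + 1) : {α : ℕ → ℕ | IsXseq n k α}.Finite := by
  have hsub : {α : ℕ → ℕ | IsXseq n k α} ⊆ Set.range (fun (f : Fin (k + 1) → Fin (n + 2 - k)) =>
      (fun j => if h : j ≤ k then (f ⟨j, by omega⟩ : ℕ) else 0)) := by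
    intro α hα
    refine ⟨fun i => ⟨α i, ?_⟩, ?_⟩
    · have h1 : α (i : ℕ) ≤ α k := hα.1 i k (by have := i.2; omega) (le_refl k)
      have h2 := hα.2.1
      omega
    · funext j
      by_cases hj : j ≤ k
      · simp only [dif_pos hj]
      · simp only [dif_neg hj]
        exact (hα.2.2 j (by omega)).symm
  exact Set.Finite.subset (Set.finite_range _) hsub

end Stmt10Aux

open Stmt10Aux

/-- For a divisor `d` of `(k,n)`, the number of `α ∈ X_n^k` with `α 0 = 0` and period `d`
equals `∑_{B ⊆ PD_d} (-1)^{|B|} C((d/∏_{p∈B}p)·(n+2)/(k+1) − 1, (d/∏_{p∈B}p) − 1)`. -/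
theorem stmt10 (n k d : ℕ) (hk : 1 ≤ k) (hkn : k < n + 1) (hd : IsDivOf n k d) :
    (Nat.card {α : ℕ → ℕ // IsXseq n k α ∧ α 0 = 0 ∧ period n k α = d} : ℤ) =
      ∑ B ∈ (PDfinset n k d).powerset,
        (-1 : ℤ) ^ B.card *
          (Nat.choose ((d / ∏ p ∈ B, p) * (n + 2) / (k + 1) - 1)
            ((d / ∏ p ∈ B, p) - 1) : ℤ) := by
  classical
  have hTfin : {α : ℕ → ℕ | IsXseq n k α ∧ α 0 = 0 ∧ IsDAdd n k d α}.Finite :=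
    (xseq_finite hkn).subset (fun α hα => hα.1)
  obtain ⟨T, hTmem⟩ : ∃ T : Finset (ℕ → ℕ),
      ∀ α, α ∈ T ↔ IsXseq n k α ∧ α 0 = 0 ∧ IsDAdd n k d α := by
    refine ⟨hTfin.toFinset, fun α => ?_⟩
    rw [Set.Finite.mem_toFinset]
    rfl
  -- LHS as a finset card
  have hLHS : Nat.card {α : ℕ → ℕ // IsXseq n k α ∧ α 0 = 0 ∧ period n k α = d}
      = (T.filter (fun α => ∀ p ∈ PDfinset n k d, ¬ IsDAdd n k (d / p) α)).card := by
    have hseteq : {α : ℕ → ℕ | IsXseq n k α ∧ α 0 = 0 ∧ period n k α = d}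
        = ↑(T.filter (fun α => ∀ p ∈ PDfinset n k d, ¬ IsDAdd n k (d / p) α)) := by
      ext α
      simp only [Set.mem_setOf_eq, Finset.coe_filter, hTmem]
      constructor
      · rintro ⟨hX, h0, hper⟩
        have h := (period_eq_iff hkn hd h0).mp hper
        exact ⟨⟨hX, h0, h.1⟩, h.2⟩
      · rintro ⟨⟨hX, h0, hdadd⟩, hnone⟩
        exact ⟨hX, h0, (period_eq_iff hkn hd h0).mpr ⟨hdadd, hnone⟩⟩
    have h1 : Nat.card {α : ℕ → ℕ // IsXseq n k α ∧ α 0 = 0 ∧ period n k α = d}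
        = Set.ncard {α : ℕ → ℕ | IsXseq n k α ∧ α 0 = 0 ∧ period n k α = d} :=
      Nat.card_coe_set_eq _
    rw [h1, hseteq, Set.ncard_coe_finset]
  -- card of each intersection
  have hBcard : ∀ B, B ⊆ PDfinset n k d →
      ((T.filter (fun α => ∀ p ∈ B, IsDAdd n k (d / p) α)).card : ℤ)
        = (Nat.choose ((d / ∏ p ∈ B, p) * (n + 2) / (k + 1) - 1) ((d / ∏ p ∈ B, p) - 1) : ℤ) := by
    intro B hBsub
    have heD : IsDivOf n k (d / ∏ p ∈ B, p) := eB_isDivOf hkn hd hBsub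
    have hseteq : {α : ℕ → ℕ | IsXseq n k α ∧ α 0 = 0 ∧ IsDAdd n k (d / ∏ p ∈ B, p) α}
        = ↑(T.filter (fun α => ∀ p ∈ B, IsDAdd n k (d / p) α)) := by
      ext α
      simp only [Set.mem_setOf_eq, Finset.coe_filter, hTmem]
      constructor
      · rintro ⟨hX, h0, hE⟩
        have h := (inter_iff hkn hd hBsub h0).mpr hE
        exact ⟨⟨hX, h0, h.1⟩, h.2⟩
      · rintro ⟨⟨hX, h0, hdadd⟩, hall⟩
        exact ⟨hX, h0, (inter_iff hkn hd hBsub h0).mp ⟨hdadd, hall⟩⟩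
    have h1 : Nat.card {α : ℕ → ℕ // IsXseq n k α ∧ α 0 = 0 ∧ IsDAdd n k (d / ∏ p ∈ B, p) α}
        = Set.ncard {α : ℕ → ℕ | IsXseq n k α ∧ α 0 = 0 ∧ IsDAdd n k (d / ∏ p ∈ B, p) α} :=
      Nat.card_coe_set_eq _
    have h2 : (T.filter (fun α => ∀ p ∈ B, IsDAdd n k (d / p) α)).card
        = Nat.card {α : ℕ → ℕ // IsXseq n k α ∧ α 0 = 0 ∧ IsDAdd n k (d / ∏ p ∈ B, p) α} := by
      rw [h1, hseteq, Set.ncard_coe_finset]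
    rw [h2, card_dadd hkn heD, choose_arg_eq hkn heD]
  -- pointwise inclusion-exclusion identity
  have hpoint : ∀ α : ℕ → ℕ,
      (if (∀ p ∈ PDfinset n k d, ¬ IsDAdd n k (d / p) α) then (1 : ℤ) else 0)
        = ∑ B ∈ (PDfinset n k d).powerset,
            ∏ p ∈ B, (if IsDAdd n k (d / p) α then (-1 : ℤ) else 0) := by
    intro α
    have hstep1 : (if (∀ p ∈ PDfinset n k d, ¬ IsDAdd n k (d / p) α) then (1 : ℤ) else 0)
        = ∏ p ∈ PDfinset n k d, (if IsDAdd n k (d / p) α then (0 : ℤ) else 1) := by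
      by_cases hall : ∀ p ∈ PDfinset n k d, ¬ IsDAdd n k (d / p) α
      · rw [if_pos hall]
        symm
        apply Finset.prod_eq_one
        intro p hp
        rw [if_neg (hall p hp)]
      · rw [if_neg hall]
        push_neg at hall
        obtain ⟨p, hp, hpadd⟩ := hall
        symm
        apply Finset.prod_eq_zero hp
        rw [if_pos hpadd]
    have hstep2 : ∀ p : ℕ, (if IsDAdd n k (d / p) α then (0 : ℤ) else 1)
        = (if IsDAdd n k (d / p) α then (-1 : ℤ) else 0) + 1 := by
      intro p
      split <;> ring
    rw [hstep1, Finset.prod_congr rfl (fun p _ => hstep2 p), Finset.prod_add]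
    apply Finset.sum_congr rfl
    intro B _
    rw [Finset.prod_const_one, mul_one]
  -- inner sums
  have hinner : ∀ B : Finset ℕ,
      (∑ α ∈ T, ∏ p ∈ B, (if IsDAdd n k (d / p) α then (-1 : ℤ) else 0))
        = (-1 : ℤ) ^ B.card
          * ((T.filter (fun α => ∀ p ∈ B, IsDAdd n k (d / p) α)).card : ℤ) := by
    intro B
    have hprodite : ∀ α : ℕ → ℕ, (∏ p ∈ B, (if IsDAdd n k (d / p) α then (-1 : ℤ) else 0))
        = (-1 : ℤ) ^ B.card * (if (∀ p ∈ B, IsDAdd n k (d / p) α) then (1 : ℤ) else 0) := by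
      intro α
      by_cases hall : ∀ p ∈ B, IsDAdd n k (d / p) α
      · rw [if_pos hall, mul_one, Finset.prod_congr rfl (fun p hp => if_pos (hall p hp)),
          Finset.prod_const]
      · rw [if_neg hall, mul_zero]
        push_neg at hall
        obtain ⟨p, hp, hpnadd⟩ := hall
        exact Finset.prod_eq_zero hp (if_neg hpnadd)
    rw [Finset.sum_congr rfl (fun α _ => hprodite α), ← Finset.mul_sum, Finset.sum_boole]
  -- put everything together
  rw [hLHS]
  have hmain : ((T.filter (fun α => ∀ p ∈ PDfinset n k d, ¬ IsDAdd n k (d / p) α)).card : ℤ)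
      = ∑ B ∈ (PDfinset n k d).powerset, (-1 : ℤ) ^ B.card
          * ((T.filter (fun α => ∀ p ∈ B, IsDAdd n k (d / p) α)).card : ℤ) := by
    rw [← Finset.sum_boole]
    rw [Finset.sum_congr rfl (fun α _ => hpoint α), Finset.sum_comm]
    exact Finset.sum_congr rfl (fun B _ => hinner B)
  rw [hmain]
  apply Finset.sum_congr rfl
  intro B hBmem
  rw [hBcard B (Finset.mem_powerset.mp hBmem)]
end

section
/- Let 1 ≤ k < n+1 be integers such that k+1 and n+2 are coprime. Then the number of equivalence classes, up to rotation, of (k+1)-element subsets of the vertex set of a regular (n+2)-gon equals (1/(n+2))·C(n+2, k+1) = (1/(k+1))·C(n+1, k). -/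
/-- The number of orbits of the rotation (translation) action of `ℤ/m` on the
set of `r`-element subsets of `ℤ/m`. -/
noncomputable def numOrbits (m r : ℕ) : ℕ :=
  Nat.card (Quot (fun s t : {s : Finset (ZMod m) // s.card = r} =>
    ∃ g : ZMod m, s.1.image (fun x => x + g) = t.1))

instance instVAdd (m r : ℕ) : AddAction (ZMod m) {s : Finset (ZMod m) // s.card = r} where
  vadd g s := ⟨s.1.image (fun x => x + g), by
    rw [Finset.card_image_of_injective _ (add_left_injective g)]; exact s.2⟩
  zero_vadd s := Subtype.ext (by
    show s.1.image (fun x => x + 0) = s.1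
    simp)
  add_vadd g h s := Subtype.ext (by
    show s.1.image (fun x => x + (g + h)) = (s.1.image (fun x => x + h)).image (fun x => x + g)
    rw [Finset.image_image]
    congr 1
    funext x
    simp only [Function.comp_apply]; ring)

lemma vadd_val (m r : ℕ) (g : ZMod m) (s : {s : Finset (ZMod m) // s.card = r}) :
    (g +ᵥ s).1 = s.1.image (fun x => x + g) := rfl

lemma free_vadd (m r : ℕ) [NeZero m] (hcop : Nat.Coprime r m)
    (g : ZMod m) (s : {s : Finset (ZMod m) // s.card = r}) (h : g +ᵥ s = s) : g = 0 := by
  have hs : s.1.image (fun x => x + g) = s.1 := congrArg Subtype.val h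
  have hsum : ∑ x ∈ s.1, (x + g) = ∑ x ∈ s.1, x := by
    conv_rhs => rw [← hs]
    rw [Finset.sum_image (fun x _ y _ h => add_left_injective g h)]
  rw [Finset.sum_add_distrib, Finset.sum_const, s.2, add_eq_left, nsmul_eq_mul] at hsum
  have hu : IsUnit ((r : ZMod m)) := (ZMod.unitOfCoprime r hcop).isUnit
  obtain ⟨u, hu⟩ := hu
  rw [← hu] at hsum
  simpa using (Units.mul_right_eq_zero u).mp hsum

lemma orbit_count (m r : ℕ) [NeZero m] (hcop : Nat.Coprime r m) :
    numOrbits m r * m = m.choose r := by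
  classical
  have hstab : ∀ b : {s : Finset (ZMod m) // s.card = r},
      AddAction.stabilizer (ZMod m) b = ⊥ := by
    intro b
    ext g
    simp only [AddAction.mem_stabilizer_iff, AddSubgroup.mem_bot]
    exact ⟨fun h => free_vadd m r hcop g b h, fun h => by subst h; exact zero_vadd _ _⟩
  have e1 : {s : Finset (ZMod m) // s.card = r} ≃
      (AddAction.orbitRel.Quotient (ZMod m) {s : Finset (ZMod m) // s.card = r}) × ZMod m := by
    refine (AddAction.selfEquivSigmaOrbitsQuotientStabilizer (ZMod m) _).trans ?_
    refine (Equiv.sigmaCongrRight (fun ω => ?_)).trans (Equiv.sigmaEquivProd _ _)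
    rw [hstab]
    exact (QuotientAddGroup.quotientBot (G := ZMod m)).toEquiv
  have e2 : Quot (fun s t : {s : Finset (ZMod m) // s.card = r} =>
        ∃ g : ZMod m, s.1.image (fun x => x + g) = t.1)
      ≃ AddAction.orbitRel.Quotient (ZMod m) {s : Finset (ZMod m) // s.card = r} := by
    refine Quot.congrRight (fun s t => ?_)
    show _ ↔ s ∈ AddAction.orbit (ZMod m) t
    rw [AddAction.mem_orbit_iff]
    constructor
    · rintro ⟨g, hg⟩
      have ht : g +ᵥ s = t := Subtype.ext hg
      exact ⟨-g, by rw [← ht, ← add_vadd, neg_add_cancel, zero_vadd]⟩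
    · rintro ⟨g, rfl⟩
      have h : (-g) +ᵥ (g +ᵥ t) = t := by rw [← add_vadd, neg_add_cancel, zero_vadd]
      exact ⟨-g, congrArg Subtype.val h⟩
  calc numOrbits m r * m
      = Nat.card (AddAction.orbitRel.Quotient (ZMod m) {s : Finset (ZMod m) // s.card = r})
        * Nat.card (ZMod m) := by rw [numOrbits, Nat.card_congr e2, Nat.card_zmod]
    _ = Nat.card ((AddAction.orbitRel.Quotient (ZMod m) {s : Finset (ZMod m) // s.card = r})
        × ZMod m) := (Nat.card_prod _ _).symm
    _ = Nat.card {s : Finset (ZMod m) // s.card = r} := (Nat.card_congr e1).symm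
    _ = m.choose r := by
        rw [Nat.card_eq_fintype_card, Fintype.card_finset_len, ZMod.card]

/-- If `k+1` and `n+2` are coprime, the number of rotation-equivalence classes of
`(k+1)`-element subsets of the vertices of a regular `(n+2)`-gon equals
`(1/(n+2))·C(n+2, k+1) = (1/(k+1))·C(n+1, k)`. -/
theorem stmt11 (n k : ℕ) (hk : 1 ≤ k) (hkn : k < n + 1)
    (hcop : Nat.Coprime (k + 1) (n + 2)) :
    numOrbits (n + 2) (k + 1) * (n + 2) = (n + 2).choose (k + 1) ∧
    numOrbits (n + 2) (k + 1) * (k + 1) = (n + 1).choose k := by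
  have h1 : numOrbits (n + 2) (k + 1) * (n + 2) = (n + 2).choose (k + 1) :=
    orbit_count (n + 2) (k + 1) hcop
  refine ⟨h1, ?_⟩
  have hid : (n + 2) * (n + 1).choose k = (n + 2).choose (k + 1) * (k + 1) :=
    Nat.add_one_mul_choose_eq (n + 1) k
  have h2 : numOrbits (n + 2) (k + 1) * (k + 1) * (n + 2)
      = (n + 1).choose k * (n + 2) := by
    calc numOrbits (n + 2) (k + 1) * (k + 1) * (n + 2)
        = numOrbits (n + 2) (k + 1) * (n + 2) * (k + 1) := by ring
      _ = (n + 2).choose (k + 1) * (k + 1) := by rw [h1]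
      _ = (n + 1).choose k * (n + 2) := by rw [← hid]; ring
  exact Nat.eq_of_mul_eq_mul_right (by omega) h2
end

section
/- Let 1 ≤ k < n+1 be integers with gcd(n+2, k+1) = p a prime. Then the number of orbits of the rotation action of ℤ/(n+2) on (k+1)-element subsets of ℤ/(n+2) equals (1/(k+1))·C(n+1, k) + ((p−1)/(k+1))·C((n+2)/p − 1, (k+1)/p − 1). -/
open Finset

section Aux

variable {G : Type*} [AddCommGroup G] [Fintype G] [DecidableEq G]

/-- If a finset is invariant under translation by `g`, it is invariant under all
integer multiples of `g`. -/
lemma aux_inv_closure {g : G} {s : Finset G} (hs : s.image (· + g) = s) :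
    ∀ z : ℤ, ∀ x : G, x + z • g ∈ s ↔ x ∈ s := by
  have hinv : ∀ x : G, x + g ∈ s ↔ x ∈ s := by
    intro x
    constructor
    · intro hx
      rw [← hs] at hx
      rcases Finset.mem_image.1 hx with ⟨y, hy, hxy⟩
      have : y = x := add_right_cancel hxy
      exact this ▸ hy
    · intro hx; rw [← hs]; exact Finset.mem_image_of_mem _ hx
  intro z
  induction z using Int.induction_on with
  | zero => simp
  | succ n ih =>
    intro x
    have h1 : x + ((n : ℤ) + 1) • g = (x + (n : ℤ) • g) + g := by
      rw [add_smul, one_smul, add_assoc]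
    rw [h1, hinv]
    exact ih x
  | pred n ih =>
    intro x
    have h2 : (-(n : ℤ) - 1) • g + g = (-(n : ℤ)) • g := by
      rw [sub_smul, one_smul]; abel
    have h1 : (x + (-(n : ℤ) - 1) • g) + g = x + (-(n : ℤ)) • g := by
      rw [add_assoc, h2]
    rw [← hinv (x + (-(n : ℤ) - 1) • g), h1]
    exact ih x

lemma aux_coset_card (H : AddSubgroup G) [DecidableEq (G ⧸ H)] (y : G) :
    (univ.filter fun x : G =>
      (QuotientAddGroup.mk x : G ⧸ H) = QuotientAddGroup.mk y).card = Nat.card H := by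
  have e : {x : G // (QuotientAddGroup.mk x : G ⧸ H) = QuotientAddGroup.mk y} ≃ H :=
    { toFun := fun x => ⟨-y + x.1, by rw [← QuotientAddGroup.eq]; exact x.2.symm⟩
      invFun := fun h => ⟨y + h.1,
        by rw [QuotientAddGroup.eq]
           have : -(y + h.1) + y = -h.1 := by abel
           rw [this]; exact H.neg_mem h.2⟩
      left_inv := fun x => by ext; simp
      right_inv := fun h => by ext; simp }
  rw [← Fintype.card_subtype, ← Nat.card_eq_fintype_card, Nat.card_congr e]

lemma aux_invariant_card (H : AddSubgroup G) [DecidableEq (G ⧸ H)] (s : Finset G)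
    (hs : ∀ x ∈ s, ∀ h ∈ H, x + h ∈ s) :
    s.card = (s.image (QuotientAddGroup.mk : G → G ⧸ H)).card * Nat.card H := by
  rw [Finset.card_eq_sum_card_image (QuotientAddGroup.mk : G → G ⧸ H) s]
  rw [Finset.sum_congr rfl (fun q hq => ?_), Finset.sum_const, smul_eq_mul]
  rcases Finset.mem_image.1 hq with ⟨y, hy, rfl⟩
  have hfe : s.filter (fun a => (QuotientAddGroup.mk a : G ⧸ H) = QuotientAddGroup.mk y)
      = univ.filter (fun a => (QuotientAddGroup.mk a : G ⧸ H) = QuotientAddGroup.mk y) := by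
    ext x
    simp only [mem_filter, mem_univ, true_and, and_iff_right_iff_imp]
    intro hx
    have hmem : -y + x ∈ H := by rw [← QuotientAddGroup.eq]; exact hx.symm
    have : x = y + (-y + x) := by abel
    rw [this]; exact hs y hy _ hmem
  rw [hfe, aux_coset_card]

/-- The number of `r`-element subsets of `G` invariant under translation by `g`. -/
lemma aux_card_fixed (g : G) (r : ℕ) :
    Nat.card {s : Finset G // s.card = r ∧ s.image (· + g) = s} =
      if addOrderOf g ∣ r then
        (Fintype.card G / addOrderOf g).choose (r / addOrderOf g) else 0 := by
  classical
  set H := AddSubgroup.zmultiples g with hH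
  set d := addOrderOf g with hd
  have hdpos : 0 < d := addOrderOf_pos g
  have hcardH : Nat.card H = d := Nat.card_zmultiples g
  have hmemg : g ∈ H := AddSubgroup.mem_zmultiples g
  have key : ∀ s : Finset G, s.image (· + g) = s → ∀ x ∈ s, ∀ h ∈ H, x + h ∈ s := by
    intro s hsinv x hx h hh
    rcases AddSubgroup.mem_zmultiples_iff.1 hh with ⟨z, rfl⟩
    exact (aux_inv_closure hsinv z x).2 hx
  have hmk : ∀ x : G, (QuotientAddGroup.mk (x + g) : G ⧸ H) = QuotientAddGroup.mk x := by
    intro x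
    rw [QuotientAddGroup.eq]
    have : -(x + g) + x = -g := by abel
    rw [this]; exact H.neg_mem hmemg
  have him : ∀ t : Finset (G ⧸ H),
      (univ.filter (fun x => (QuotientAddGroup.mk x : G ⧸ H) ∈ t)).image
        (QuotientAddGroup.mk : G → G ⧸ H) = t := by
    intro t
    ext q
    simp only [Finset.mem_image, mem_filter, mem_univ, true_and]
    constructor
    · rintro ⟨x, hx, rfl⟩; exact hx
    · intro hq
      rcases QuotientAddGroup.mk_surjective q with ⟨y, rfl⟩
      exact ⟨y, hq, rfl⟩
  have hinvf : ∀ t : Finset (G ⧸ H),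
      (univ.filter (fun x => (QuotientAddGroup.mk x : G ⧸ H) ∈ t)).image (· + g)
        = univ.filter (fun x => (QuotientAddGroup.mk x : G ⧸ H) ∈ t) := by
    intro t
    ext y
    simp only [Finset.mem_image, mem_filter, mem_univ, true_and]
    constructor
    · rintro ⟨x, hx, rfl⟩; rw [hmk]; exact hx
    · intro hy
      refine ⟨y - g, ?_, by abel⟩
      have h3 : y - g + g = y := by abel
      rw [← h3, hmk] at hy
      exact hy
  have hfcard : ∀ t : Finset (G ⧸ H),
      (univ.filter (fun x => (QuotientAddGroup.mk x : G ⧸ H) ∈ t)).card = t.card * d := by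
    intro t
    have h4 := aux_invariant_card H
      (univ.filter (fun x => (QuotientAddGroup.mk x : G ⧸ H) ∈ t)) (key _ (hinvf t))
    rw [him t, hcardH] at h4
    exact h4
  have E : {s : Finset G // s.card = r ∧ s.image (· + g) = s} ≃
      {t : Finset (G ⧸ H) // t.card * d = r} :=
    { toFun := fun s => ⟨s.1.image (QuotientAddGroup.mk : G → G ⧸ H), by
        have h5 := aux_invariant_card H s.1 (key s.1 s.2.2)
        rw [hcardH] at h5
        rw [← h5, s.2.1]⟩
      invFun := fun t => ⟨univ.filter (fun x => (QuotientAddGroup.mk x : G ⧸ H) ∈ t.1),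
        by rw [hfcard t.1]; exact t.2, hinvf t.1⟩
      left_inv := fun s => by
        apply Subtype.ext
        ext x
        simp only [mem_filter, mem_univ, true_and, Finset.mem_image]
        constructor
        · rintro ⟨y, hy, hxy⟩
          have hmem : -y + x ∈ H := by rw [← QuotientAddGroup.eq]; exact hxy
          have h6 : x = y + (-y + x) := by abel
          rw [h6]; exact key s.1 s.2.2 y hy _ hmem
        · intro hx; exact ⟨x, hx, rfl⟩
      right_inv := fun t => Subtype.ext (him t.1) }
  rw [Nat.card_congr E]
  by_cases hdr : d ∣ r
  · rcases hdr with ⟨r', rfl⟩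
    rw [if_pos ⟨r', rfl⟩]
    have hpred : ∀ t : Finset (G ⧸ H), t.card * d = d * r' ↔ t.card = r' := by
      intro t
      rw [mul_comm d r']
      exact ⟨fun h => Nat.eq_of_mul_eq_mul_right hdpos h, fun h => by rw [h]⟩
    haveI : Fintype (G ⧸ H) := Fintype.ofFinite _
    have hQ : Fintype.card (G ⧸ H) = Fintype.card G / d := by
      have hl := AddSubgroup.card_eq_card_quotient_mul_card_addSubgroup H
      rw [hcardH, Nat.card_eq_fintype_card, Nat.card_eq_fintype_card] at hl
      rw [hl, Nat.mul_div_cancel _ hdpos]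
    rw [Nat.card_congr (Equiv.subtypeEquivRight hpred), Nat.card_eq_fintype_card,
      Fintype.card_finset_len, hQ, Nat.mul_div_cancel_left r' hdpos]
  · rw [if_neg hdr]
    have : IsEmpty {t : Finset (G ⧸ H) // t.card * d = r} := by
      constructor; rintro ⟨t, ht⟩; exact hdr ⟨t.card, by rw [← ht, mul_comm]⟩
    exact Nat.card_of_isEmpty

end Aux

section Act

instance actZMod (m r : ℕ) : AddAction (ZMod m) {s : Finset (ZMod m) // s.card = r} where
  vadd g s := ⟨s.1.image (fun x => x + g), by
    rw [Finset.card_image_of_injective _ (add_left_injective g)]; exact s.2⟩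
  zero_vadd s := by
    apply Subtype.ext
    show s.1.image (fun x => x + 0) = s.1
    simp
  add_vadd g h s := by
    apply Subtype.ext
    show s.1.image (fun x => x + (g + h))
        = (s.1.image (fun x => x + h)).image (fun x => x + g)
    rw [Finset.image_image]
    congr 1
    funext x
    show x + (g + h) = x + h + g
    ring

theorem burnside_zmod (m r : ℕ) [NeZero m] :
    numOrbits m r * m =
      ∑ g : ZMod m,
        (if addOrderOf g ∣ r then (m / addOrderOf g).choose (r / addOrderOf g) else 0) := by
  classical
  set β := {s : Finset (ZMod m) // s.card = r} with hβ
  haveI : ∀ a : ZMod m, Fintype (AddAction.fixedBy β a) := fun a => Fintype.ofFinite _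
  haveI : Fintype (Quotient (AddAction.orbitRel (ZMod m) β)) := Fintype.ofFinite _
  have hiff : ∀ s t : β,
      (∃ g : ZMod m, s.1.image (fun x => x + g) = t.1) ↔ AddAction.orbitRel (ZMod m) β s t := by
    intro s t
    rw [AddAction.orbitRel_apply, AddAction.mem_orbit_iff]
    constructor
    · rintro ⟨g, hg⟩
      have hg' : g +ᵥ s = t := Subtype.ext hg
      exact ⟨-g, by rw [← hg', neg_vadd_vadd]⟩
    · rintro ⟨g, hg⟩
      have h2 : -g +ᵥ (g +ᵥ t) = t := neg_vadd_vadd g t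
      rw [hg] at h2
      exact ⟨-g, congrArg Subtype.val h2⟩
  have e2 : (Quot (fun s t : β => ∃ g : ZMod m, s.1.image (fun x => x + g) = t.1)) ≃
      Quotient (AddAction.orbitRel (ZMod m) β) := Quot.congrRight hiff
  have hnum : numOrbits m r = Fintype.card (Quotient (AddAction.orbitRel (ZMod m) β)) := by
    rw [numOrbits, Nat.card_congr e2, Nat.card_eq_fintype_card]
  have hfix : ∀ g : ZMod m, Fintype.card (AddAction.fixedBy β g) =
      (if addOrderOf g ∣ r then (m / addOrderOf g).choose (r / addOrderOf g) else 0) := by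
    intro g
    have e : AddAction.fixedBy β g ≃ {s : Finset (ZMod m) // s.card = r ∧ s.image (· + g) = s} :=
      { toFun := fun x => ⟨x.1.1, x.1.2, congrArg Subtype.val x.2⟩
        invFun := fun s => ⟨⟨s.1, s.2.1⟩, Subtype.ext s.2.2⟩
        left_inv := fun x => rfl
        right_inv := fun s => rfl }
    rw [← Nat.card_eq_fintype_card, Nat.card_congr e, aux_card_fixed g r, ZMod.card]
  have hb := AddAction.sum_card_fixedBy_eq_card_orbits_mul_card_addGroup (ZMod m) β
  rw [ZMod.card] at hb
  rw [hnum, ← hb]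
  exact Finset.sum_congr rfl fun g _ => hfix g

end Act

set_option maxHeartbeats 1600000 in
/-- If `gcd(n+2, k+1) = p` is prime, the number of orbits of the rotation action of
`ℤ/(n+2)` on `(k+1)`-element subsets equals
`(1/(k+1))·C(n+1,k) + ((p−1)/(k+1))·C((n+2)/p − 1, (k+1)/p − 1)`. -/
theorem stmt12 (n k p : ℕ) (hk : 1 ≤ k) (hkn : k < n + 1) (hp : p.Prime)
    (hgcd : Nat.gcd (n + 2) (k + 1) = p) :
    numOrbits (n + 2) (k + 1) * (k + 1) =
      (n + 1).choose k + (p - 1) * ((n + 2) / p - 1).choose ((k + 1) / p - 1) := by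
  classical
  set m := n + 2 with hm
  set r := k + 1 with hr
  haveI : NeZero m := ⟨by omega⟩
  have hpm : p ∣ m := hgcd ▸ Nat.gcd_dvd_left _ _
  have hpr : p ∣ r := hgcd ▸ Nat.gcd_dvd_right _ _
  have hp1 : p ≠ 1 := hp.ne_one
  have hcardZ : Fintype.card (ZMod m) = m := ZMod.card m
  have hord : ∀ g : ZMod m,
      (if addOrderOf g ∣ r then (m / addOrderOf g).choose (r / addOrderOf g) else 0) =
        (if addOrderOf g = 1 then m.choose r else 0) +
        (if addOrderOf g = p then (m / p).choose (r / p) else 0) := by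
    intro g
    have hdm : addOrderOf g ∣ m := by
      have hdc := addOrderOf_dvd_card (x := g)
      rwa [hcardZ] at hdc
    by_cases h1 : addOrderOf g = 1
    · rw [h1, if_pos (one_dvd r), if_pos rfl, if_neg (fun h => hp1 h.symm)]
      simp
    · by_cases h2 : addOrderOf g = p
      · rw [h2, if_pos hpr, if_neg hp1, if_pos rfl, zero_add]
      · have hnr : ¬ addOrderOf g ∣ r := by
          intro hdr
          have hdg := Nat.dvd_gcd hdm hdr
          rw [hgcd] at hdg
          rcases Nat.Prime.eq_one_or_self_of_dvd hp _ hdg with h | h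
          exacts [h1 h, h2 h]
        rw [if_neg hnr, if_neg h1, if_neg h2]
  have hsum : numOrbits m r * m = m.choose r + (p - 1) * (m / p).choose (r / p) := by
    rw [burnside_zmod m r]
    rw [Finset.sum_congr rfl (fun g _ => hord g), Finset.sum_add_distrib]
    rw [← Finset.sum_filter, ← Finset.sum_filter, Finset.sum_const, Finset.sum_const]
    rw [IsAddCyclic.card_addOrderOf_eq_totient (by rw [hcardZ]; exact one_dvd m),
        IsAddCyclic.card_addOrderOf_eq_totient (by rw [hcardZ]; exact hpm)]
    rw [Nat.totient_one, Nat.totient_prime hp]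
    simp [smul_eq_mul]
  have h1 : m * ((n + 1).choose k) = m.choose r * r := Nat.add_one_mul_choose_eq (n + 1) k
  have hm1 : 1 ≤ m / p := (Nat.one_le_div_iff hp.pos).2 (Nat.le_of_dvd (by omega) hpm)
  have hr1 : 1 ≤ r / p := (Nat.one_le_div_iff hp.pos).2 (Nat.le_of_dvd (by omega) hpr)
  have e1 : m / p - 1 + 1 = m / p := by omega
  have e2 : r / p - 1 + 1 = r / p := by omega
  have base : (m / p) * ((m / p - 1).choose (r / p - 1)) = (m / p).choose (r / p) * (r / p) := by
    have hb := Nat.add_one_mul_choose_eq (m / p - 1) (r / p - 1)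
    rw [e1, e2] at hb
    exact hb
  have h2 : m * ((m / p - 1).choose (r / p - 1)) = (m / p).choose (r / p) * r := by
    calc m * ((m / p - 1).choose (r / p - 1))
        = p * ((m / p) * ((m / p - 1).choose (r / p - 1))) := by
          rw [← mul_assoc, Nat.mul_div_cancel' hpm]
      _ = p * ((m / p).choose (r / p) * (r / p)) := by rw [base]
      _ = (m / p).choose (r / p) * (p * (r / p)) := by ring
      _ = (m / p).choose (r / p) * r := by rw [Nat.mul_div_cancel' hpr]
  have hmpos : 0 < m := by omega
  apply Nat.eq_of_mul_eq_mul_left hmpos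
  calc m * (numOrbits m r * r) = (numOrbits m r * m) * r := by ring
    _ = (m.choose r + (p - 1) * (m / p).choose (r / p)) * r := by rw [hsum]
    _ = m.choose r * r + (p - 1) * ((m / p).choose (r / p) * r) := by ring
    _ = m * ((n + 1).choose k) + (p - 1) * (m * ((m / p - 1).choose (r / p - 1))) := by
        rw [← h1, ← h2]
    _ = m * ((n + 1).choose k + (p - 1) * ((m / p - 1).choose (r / p - 1))) := by ring
end

section
/- Let 1 ≤ k < n+1 be integers with k+1 prime. Then the number of orbits of the rotation action of ℤ/(n+2) on (k+1)-element subsets of ℤ/(n+2) equals k/(k+1) + (1/(k+1))·C(n+1,k) if (k+1) divides n+2, and (1/(k+1))·C(n+1,k) otherwise. -/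
open Finset AddAction
attribute [local instance] Classical.propDecidable
set_option linter.unusedSectionVars false
set_option maxHeartbeats 800000

namespace Nk13

variable (m p : ℕ) [NeZero m]

abbrev S := {s : Finset (ZMod m) // s.card = p}

instance : AddAction (ZMod m) (S m p) where
  vadd g s := ⟨s.1.image (fun x => x + g), by
    rw [Finset.card_image_of_injective _ (add_left_injective g)]; exact s.2⟩
  zero_vadd s := Subtype.ext (by show s.1.image (fun x => x + 0) = s.1; simp)
  add_vadd g h s := Subtype.ext (by
    show s.1.image (fun x => x + (g + h)) = (s.1.image (fun x => x + h)).image (fun x => x + g)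
    rw [Finset.image_image]
    congr 1; funext x; simp [Function.comp, add_assoc, add_comm g h])

lemma vadd_def (g : ZMod m) (s : S m p) : (g +ᵥ s).1 = s.1.image (fun x => x + g) := rfl


variable {m p} {a : ZMod m} {s : Finset (ZMod m)}

lemma step (hs : s.image (fun x => x + a) = s) {x : ZMod m} (hx : x ∈ s) : x + a ∈ s := by
  rw [← hs]; exact Finset.mem_image_of_mem _ hx

lemma mem_add_nsmul (hs : s.image (fun x => x + a) = s) {x : ZMod m} (hx : x ∈ s) (n : ℕ) :
    x + n • a ∈ s := by
  induction n with
  | zero => simpa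
  | succ n ih =>
    have := step hs ih
    rwa [add_assoc, ← succ_nsmul] at this

lemma mem_add_zmultiples (hs : s.image (fun x => x + a) = s) {x : ZMod m} (hx : x ∈ s)
    {b : ZMod m} (hb : b ∈ AddSubgroup.zmultiples a) : x + b ∈ s := by
  obtain ⟨k, hk⟩ := AddSubgroup.mem_zmultiples_iff.mp hb
  obtain ⟨n, hn⟩ := ZMod.natCast_zmod_surjective (n := m) (k : ZMod m)
  have : b = n • a := by
    rw [← hk, zsmul_eq_mul, ← hn, nsmul_eq_mul]
  rw [this]
  exact mem_add_nsmul hs hx n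

local notation "H" => AddSubgroup.zmultiples a
local notation "π" => (QuotientAddGroup.mk : ZMod m → ZMod m ⧸ AddSubgroup.zmultiples a)

lemma fiber_eq (hs : s.image (fun x => x + a) = s) {x : ZMod m} (hx : x ∈ s) :
    s.filter (fun y => π y = π x) = Finset.image (fun h : H => x + (h : ZMod m)) Finset.univ := by
  ext y
  simp only [Finset.mem_filter, Finset.mem_image, Finset.mem_univ, true_and]
  constructor
  · rintro ⟨hy, hq⟩
    have : -x + y ∈ H := by
      rw [QuotientAddGroup.eq] at hq
      simpa using (AddSubgroup.neg_mem _ hq)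
    exact ⟨⟨-x + y, this⟩, by simp⟩
  · rintro ⟨h, rfl⟩
    refine ⟨mem_add_zmultiples hs hx h.2, ?_⟩
    rw [QuotientAddGroup.eq]
    simpa using AddSubgroup.neg_mem _ h.2

lemma card_fiber (hs : s.image (fun x => x + a) = s) {x : ZMod m} (hx : x ∈ s) :
    (s.filter (fun y => π y = π x)).card = addOrderOf a := by
  rw [fiber_eq hs hx, Finset.card_image_of_injective _ (by intro u v huv; exact Subtype.ext (by simpa using huv)),
    Finset.card_univ, ← Nat.card_eq_fintype_card, Nat.card_zmultiples]

lemma orderOf_dvd_card_of_invariant (hs : s.image (fun x => x + a) = s) :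
    addOrderOf a ∣ s.card := by
  rw [Finset.card_eq_sum_card_fiberwise (f := fun y => π y) (t := s.image (fun y => π y))
    (fun x hx => Finset.mem_image_of_mem _ hx)]
  refine Finset.dvd_sum ?_
  intro q hq
  obtain ⟨x, hx, rfl⟩ := Finset.mem_image.mp hq
  rw [card_fiber hs hx]

lemma invariant_of_fixed {s : S m p} (hs : s ∈ fixedBy (S m p) a) :
    s.1.image (fun x => x + a) = s.1 := congrArg Subtype.val hs

lemma fixedBy_isEmpty (hp : p.Prime) (ha : a ≠ 0) (hne : addOrderOf a ≠ p) :
    IsEmpty (fixedBy (S m p) a) := by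
  constructor
  rintro ⟨s, hs⟩
  have hd := orderOf_dvd_card_of_invariant (invariant_of_fixed hs)
  rw [s.2] at hd
  rcases (Nat.Prime.eq_one_or_self_of_dvd hp _ hd) with h1 | h2
  · exact ha (AddMonoid.addOrderOf_eq_one_iff.mp h1)
  · exact hne h2

lemma univ_invariant (a : ZMod m) : (univ : Finset (ZMod m)).image (fun x => x + a) = univ := by
  apply Finset.eq_univ_of_forall
  intro y
  exact Finset.mem_image.mpr ⟨y - a, Finset.mem_univ _, by ring⟩

lemma card_fixedBy_of_orderOf (hp : p.Prime) (ha : addOrderOf a = p) :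
    Nat.card (fixedBy (S m p) a) = m / p := by
  classical
  have hcard : ∀ q : ZMod m ⧸ H, ((univ : Finset (ZMod m)).filter (fun y => π y = q)).card = p := by
    intro q
    induction q using Quotient.inductionOn with
    | h x =>
      have := card_fiber (univ_invariant a) (Finset.mem_univ x)
      rwa [ha] at this
  have hfix : ∀ q : ZMod m ⧸ H,
      a +ᵥ (⟨(univ : Finset (ZMod m)).filter (fun y => π y = q), hcard q⟩ : S m p)
        = ⟨(univ : Finset (ZMod m)).filter (fun y => π y = q), hcard q⟩ := by
    intro q
    apply Subtype.ext
    rw [vadd_def]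
    apply Finset.eq_of_subset_of_card_le
    · intro y hy
      obtain ⟨z, hz, rfl⟩ := Finset.mem_image.mp hy
      simp only [Finset.mem_filter, Finset.mem_univ, true_and] at hz ⊢
      rw [← hz]
      rw [QuotientAddGroup.eq]
      simpa using AddSubgroup.neg_mem _ (AddSubgroup.mem_zmultiples a)
    · rw [Finset.card_image_of_injective _ (add_left_injective a)]
  let G : ZMod m ⧸ H → fixedBy (S m p) a := fun q =>
    ⟨⟨(univ : Finset (ZMod m)).filter (fun y => π y = q), hcard q⟩, hfix q⟩
  have hbij : Function.Bijective G := by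
    constructor
    · intro q q' h
      have hft : ((univ : Finset (ZMod m)).filter (fun y => π y = q))
          = ((univ : Finset (ZMod m)).filter (fun y => π y = q')) :=
        congrArg (fun t => t.1.1) h
      induction q using Quotient.inductionOn with
      | h x =>
        have hx : x ∈ (univ : Finset (ZMod m)).filter (fun y => π y = (⟦x⟧ : ZMod m ⧸ H)) := by
          simp only [Finset.mem_filter, Finset.mem_univ, true_and]
        rw [hft] at hx
        have := (Finset.mem_filter.mp hx).2
        exact this
    · rintro ⟨s, hsfix⟩
      have hpos : 0 < s.1.card := by rw [s.2]; exact hp.pos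
      obtain ⟨x, hx⟩ := Finset.card_pos.mp hpos
      refine ⟨π x, ?_⟩
      apply Subtype.ext
      apply Subtype.ext
      show (univ : Finset (ZMod m)).filter (fun y => π y = π x) = s.1
      apply Finset.eq_of_subset_of_card_le
      · rw [fiber_eq (univ_invariant a) (Finset.mem_univ x)]
        intro y hy
        obtain ⟨h, _, rfl⟩ := Finset.mem_image.mp hy
        exact mem_add_zmultiples (invariant_of_fixed hsfix) hx h.2
      · rw [hcard, s.2]
  rw [← Nat.card_congr (Equiv.ofBijective G hbij)]
  have hlag := AddSubgroup.card_eq_card_quotient_mul_card_addSubgroup (H : AddSubgroup (ZMod m))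
  rw [Nat.card_zmultiples, ha, Nat.card_eq_fintype_card, ZMod.card] at hlag
  conv_rhs => rw [hlag]
  rw [Nat.mul_div_cancel _ hp.pos]


variable (m p)

noncomputable instance : Fintype (orbitRel.Quotient (ZMod m) (S m p)) := Fintype.ofFinite _

lemma numOrbits_eq : numOrbits m p = Fintype.card (orbitRel.Quotient (ZMod m) (S m p)) := by
  rw [← Nat.card_eq_fintype_card]
  apply Nat.card_congr
  apply Quot.congrRight
  intro s t
  constructor
  · rintro ⟨g, hg⟩
    refine ⟨-g, Subtype.ext ?_⟩
    rw [vadd_def, ← hg, Finset.image_image]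
    simp [Function.comp]
  · rintro ⟨g, hg⟩
    refine ⟨-g, ?_⟩
    rw [← hg, vadd_def, Finset.image_image]
    simp [Function.comp]

lemma count_orderOf (hp : p.Prime) :
    ((univ : Finset (ZMod m)).filter (fun a : ZMod m => addOrderOf a = p)).card
      = if p ∣ m then p - 1 else 0 := by
  split_ifs with h
  · have hd : p ∣ Fintype.card (ZMod m) := by rw [ZMod.card]; exact h
    have := IsAddCyclic.card_addOrderOf_eq_totient (α := ZMod m) (d := p) hd
    rw [← Nat.totient_prime hp]
    convert this using 2
  · rw [Finset.card_eq_zero, Finset.filter_eq_empty_iff]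
    intro b _ hc
    have : addOrderOf b ∣ m := by
      have := addOrderOf_dvd_card (x := b)
      rwa [ZMod.card] at this
    rw [hc] at this
    exact h this

lemma card_fixedBy_eq (hp : p.Prime) (b : ZMod m) :
    Fintype.card (fixedBy (S m p) b)
      = if b = 0 then m.choose p else if addOrderOf b = p then m / p else 0 := by
  split_ifs with h1 h2
  · subst h1
    have huniv : fixedBy (S m p) (0 : ZMod m) = Set.univ :=
      Set.eq_univ_of_forall (fun s => zero_vadd _ s)
    rw [← Nat.card_eq_fintype_card,
      Nat.card_congr ((Equiv.setCongr huniv).trans (Equiv.Set.univ _)),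
      Nat.card_eq_fintype_card, Fintype.card_finset_len, ZMod.card]
  · rw [← Nat.card_eq_fintype_card, card_fixedBy_of_orderOf hp h2]
  · rw [← Nat.card_eq_fintype_card]
    haveI := fixedBy_isEmpty (m := m) hp h1 h2
    exact Nat.card_of_isEmpty

lemma burnside (hp : p.Prime) :
    numOrbits m p * m
      = m.choose p
        + ((univ : Finset (ZMod m)).filter (fun b : ZMod m => addOrderOf b = p)).card * (m / p) := by
  have hB := AddAction.sum_card_fixedBy_eq_card_orbits_mul_card_addGroup (ZMod m) (S m p)
  rw [ZMod.card] at hB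
  rw [numOrbits_eq, ← hB]
  have hstep : ∀ b : ZMod m,
      Fintype.card (fixedBy (S m p) b)
        = (if b = 0 then m.choose p else 0) + (if addOrderOf b = p then m / p else 0) := by
    intro b
    rw [card_fixedBy_eq m p hp b]
    by_cases h1 : b = 0
    · subst h1
      have : addOrderOf (0 : ZMod m) = 1 := by simp
      rw [if_pos rfl, if_pos rfl, if_neg (by rw [this]; exact fun hh => hp.one_lt.ne' hh.symm)]
      ring
    · rw [if_neg h1, if_neg h1]
      simp
  rw [Finset.sum_congr rfl (fun b _ => hstep b), Finset.sum_add_distrib]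
  congr 1
  · simp
  · rw [← Finset.sum_filter, Finset.sum_const, smul_eq_mul]

end Nk13


/-- If `k+1` is prime, the number of orbits of the rotation action of `ℤ/(n+2)` on
`(k+1)`-element subsets equals `k/(k+1) + (1/(k+1))·C(n+1,k)` if `(k+1) ∣ n+2`, and
`(1/(k+1))·C(n+1,k)` otherwise. -/
theorem stmt13 (n k : ℕ) (hk : 1 ≤ k) (hkn : k < n + 1) (hp : (k + 1).Prime) :
    ((k + 1) ∣ (n + 2) →
      numOrbits (n + 2) (k + 1) * (k + 1) = k + (n + 1).choose k) ∧
    (¬ (k + 1) ∣ (n + 2) →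
      numOrbits (n + 2) (k + 1) * (k + 1) = (n + 1).choose k) := by
  have hb := Nk13.burnside (n + 2) (k + 1) hp
  rw [Nk13.count_orderOf (n + 2) (k + 1) hp] at hb
  have h2 : (n + 2) * (n + 1).choose k = (n + 2).choose (k + 1) * (k + 1) :=
    Nat.add_one_mul_choose_eq (n + 1) k
  constructor
  · intro hdvd
    rw [if_pos hdvd] at hb
    have h3 : (n + 2) / (k + 1) * (k + 1) = n + 2 := Nat.div_mul_cancel hdvd
    apply Nat.eq_of_mul_eq_mul_left (show 0 < n + 2 by omega)
    calc (n + 2) * (numOrbits (n + 2) (k + 1) * (k + 1))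
        = (numOrbits (n + 2) (k + 1) * (n + 2)) * (k + 1) := by ring
      _ = ((n + 2).choose (k + 1) + (k + 1 - 1) * ((n + 2) / (k + 1))) * (k + 1) := by rw [hb]
      _ = (n + 2).choose (k + 1) * (k + 1) + k * ((n + 2) / (k + 1) * (k + 1)) := by
            simp only [Nat.add_sub_cancel]; ring
      _ = (n + 2) * (n + 1).choose k + k * (n + 2) := by rw [← h2, h3]
      _ = (n + 2) * (k + (n + 1).choose k) := by ring
  · intro hdvd
    rw [if_neg hdvd] at hb
    apply Nat.eq_of_mul_eq_mul_left (show 0 < n + 2 by omega)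
    calc (n + 2) * (numOrbits (n + 2) (k + 1) * (k + 1))
        = (numOrbits (n + 2) (k + 1) * (n + 2)) * (k + 1) := by ring
      _ = ((n + 2).choose (k + 1) + 0 * ((n + 2) / (k + 1))) * (k + 1) := by rw [hb]
      _ = (n + 2).choose (k + 1) * (k + 1) := by ring
      _ = (n + 2) * (n + 1).choose k := h2.symm
end

section
/- Let 1 ≤ k < n+1 be integers and D = gcd(k+1, n+2). The number of orbits of the rotation action of ℤ/(n+2) on (k+1)-element subsets of ℤ/(n+2) equals the sum, over all pairs (x,y) of positive divisors of D with y dividing x, of (D·μ(x/y)/((k+1)·x))·C(y·(n+2)/D − 1, y·(k+1)/D − 1), where μ is the Möbius function. -/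
open Finset AddAction

abbrev SubFam (m r : ℕ) := {s : Finset (ZMod m) // s.card = r}

instance instAct (m r : ℕ) : AddAction (ZMod m) (SubFam m r) where
  vadd g s := ⟨s.1.image (· + g), by
    rw [Finset.card_image_of_injective _ (add_left_injective g)]; exact s.2⟩
  zero_vadd s := by ext x; simp [· +ᵥ ·]
  add_vadd g h s := by
    apply Subtype.ext
    show s.1.image (· + (g + h)) = (s.1.image (· + h)).image (· + g)
    rw [Finset.image_image]
    congr 1
    ext x
    simp [add_assoc, add_comm g h]

lemma myvadd_def {m r : ℕ} (g : ZMod m) (s : SubFam m r) :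
    (g +ᵥ s).1 = s.1.image (· + g) := rfl

lemma numOrbits_eq (m r : ℕ) :
    Nat.card (Quot (fun s t : {s : Finset (ZMod m) // s.card = r} =>
      ∃ g : ZMod m, s.1.image (fun x => x + g) = t.1)) =
    Nat.card (AddAction.orbitRel.Quotient (ZMod m) (SubFam m r)) := by
  apply Nat.card_congr
  apply Quot.congrRight
  intro s t
  show (∃ g : ZMod m, s.1.image (fun x => x + g) = t.1) ↔ s ∈ AddAction.orbit (ZMod m) t
  constructor
  · rintro ⟨g, hg⟩
    refine ⟨-g, ?_⟩
    apply Subtype.ext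
    rw [myvadd_def, ← hg, Finset.image_image]
    simp
  · rintro ⟨g, hg⟩
    refine ⟨-g, ?_⟩
    rw [← hg, myvadd_def, Finset.image_image]
    simp

section Fixed

variable {m r : ℕ} [NeZero m] (g : ZMod m)

noncomputable instance : Fintype (ZMod m ⧸ AddSubgroup.zmultiples g) := Fintype.ofFinite _
noncomputable instance : DecidableEq (ZMod m ⧸ AddSubgroup.zmultiples g) := Classical.decEq _

/-- a fixed finset is closed under cosets -/
lemma mem_of_mk_eq {s : Finset (ZMod m)} (hs : s.image (· + g) = s) {x y : ZMod m}
    (hxy : (y : ZMod m ⧸ AddSubgroup.zmultiples g) = (x : ZMod m ⧸ AddSubgroup.zmultiples g))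
    (hx : x ∈ s) : y ∈ s := by
  have key : ∀ k : ℤ, ∀ x ∈ s, x + k • g ∈ s := by
    have h1 : ∀ x ∈ s, x + g ∈ s := by
      intro x hx
      rw [← hs]; exact Finset.mem_image_of_mem _ hx
    have h2 : ∀ x ∈ s, x - g ∈ s := by
      intro x hx
      rw [← hs] at hx
      obtain ⟨y, hy, rfl⟩ := Finset.mem_image.mp hx
      simpa using hy
    intro k
    induction k using Int.induction_on with
    | zero => simpa using fun x hx => hx
    | succ k ih =>
      intro x hx
      have := h1 _ (ih x hx)
      rw [add_zsmul, one_zsmul, ← add_assoc]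
      exact this
    | pred k ih =>
      intro x hx
      have := h2 _ (ih x hx)
      rw [sub_zsmul, one_zsmul]
      rwa [sub_eq_add_neg, add_assoc] at this
  rw [QuotientAddGroup.eq] at hxy
  obtain ⟨k, hk⟩ := hxy
  have hk' : (k : ℤ) • g = -y + x := hk
  have hy : y = x + (-k) • g := by rw [neg_smul, hk']; abel
  rw [hy]
  exact key (-k) x hx

/-- each fiber of the quotient map has cardinality `addOrderOf g` -/
lemma fiber_card (q : ZMod m ⧸ AddSubgroup.zmultiples g) :
    (Finset.univ.filter
      (fun x : ZMod m => (x : ZMod m ⧸ AddSubgroup.zmultiples g) = q)).card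
      = addOrderOf g := by
  obtain ⟨x₀, rfl⟩ := QuotientAddGroup.mk_surjective q
  rw [← Fintype.card_subtype]
  have e : {x : ZMod m // (x : ZMod m ⧸ AddSubgroup.zmultiples g) = (x₀ : ZMod m ⧸ AddSubgroup.zmultiples g)}
      ≃ AddSubgroup.zmultiples g := by
    refine ⟨fun x => ⟨x.1 - x₀, ?_⟩, fun h => ⟨x₀ + h.1, ?_⟩, ?_, ?_⟩
    · have := (QuotientAddGroup.eq (s := AddSubgroup.zmultiples g)).mp x.2.symm
      rwa [show -x₀ + x.1 = x.1 - x₀ by abel] at this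
    · symm
      rw [QuotientAddGroup.eq]
      simpa using h.2
    · rintro ⟨x, hx⟩; simp
    · rintro ⟨h, hh⟩; simp
  rw [Fintype.card_congr e]
  rw [← Nat.card_eq_fintype_card, Nat.card_zmultiples]

end Fixed

section Fixed2

variable {m r : ℕ} [NeZero m]

lemma filter_preimage_card (g : ZMod m) (T : Finset (ZMod m ⧸ AddSubgroup.zmultiples g)) :
    (Finset.univ.filter
      (fun x : ZMod m => (x : ZMod m ⧸ AddSubgroup.zmultiples g) ∈ T)).card
      = addOrderOf g * T.card := by
  rw [Finset.card_eq_sum_card_fiberwise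
    (f := fun x : ZMod m => (x : ZMod m ⧸ AddSubgroup.zmultiples g)) (t := T)
    (s := Finset.univ.filter (fun x : ZMod m => (x : ZMod m ⧸ AddSubgroup.zmultiples g) ∈ T))
    (fun x hx => (Finset.mem_filter.mp hx).2)]
  rw [Finset.sum_congr rfl (fun q hq => ?_), Finset.sum_const, smul_eq_mul, mul_comm]
  rw [Finset.filter_filter]
  rw [show Finset.univ.filter (fun x : ZMod m =>
      ((x : ZMod m ⧸ AddSubgroup.zmultiples g) ∈ T ∧
      (x : ZMod m ⧸ AddSubgroup.zmultiples g) = q)) = Finset.univ.filter (fun x : ZMod m =>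
      ((x : ZMod m ⧸ AddSubgroup.zmultiples g) = q)) from ?_, fiber_card]
  ext x
  simp only [Finset.mem_filter, Finset.mem_univ, true_and]
  constructor
  · exact fun h => h.2
  · intro h; exact ⟨h ▸ hq, h⟩

lemma fixed_image_card (g : ZMod m) {s : Finset (ZMod m)} (hs : s.image (· + g) = s) :
    addOrderOf g * (s.image
      (fun x : ZMod m => (x : ZMod m ⧸ AddSubgroup.zmultiples g))).card = s.card := by
  rw [← filter_preimage_card g]
  congr 1
  ext y
  simp only [Finset.mem_filter, Finset.mem_univ, true_and, Finset.mem_image]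
  constructor
  · rintro ⟨x, hx, hxy⟩
    exact mem_of_mk_eq g hs hxy.symm hx
  · intro hy
    exact ⟨y, hy, rfl⟩

lemma fixed_filter_mem (g : ZMod m) (T : Finset (ZMod m ⧸ AddSubgroup.zmultiples g)) :
    (Finset.univ.filter
      (fun x : ZMod m => (x : ZMod m ⧸ AddSubgroup.zmultiples g) ∈ T)).image (· + g)
      = Finset.univ.filter
        (fun x : ZMod m => (x : ZMod m ⧸ AddSubgroup.zmultiples g) ∈ T) := by
  apply Finset.eq_of_subset_of_card_le
  · intro y hy
    obtain ⟨x, hx, rfl⟩ := Finset.mem_image.mp hy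
    simp only [Finset.mem_filter, Finset.mem_univ, true_and] at hx ⊢
    rwa [show ((x + g : ZMod m) : ZMod m ⧸ AddSubgroup.zmultiples g) =
      (x : ZMod m ⧸ AddSubgroup.zmultiples g) from ?_]
    rw [QuotientAddGroup.eq]
    exact ⟨-1, by simp⟩
  · rw [Finset.card_image_of_injective _ (add_left_injective g)]

lemma fixed_image_of_filter (g : ZMod m) (T : Finset (ZMod m ⧸ AddSubgroup.zmultiples g)) :
    (Finset.univ.filter
      (fun x : ZMod m => (x : ZMod m ⧸ AddSubgroup.zmultiples g) ∈ T)).image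
      (fun x : ZMod m => (x : ZMod m ⧸ AddSubgroup.zmultiples g)) = T := by
  ext q
  simp only [Finset.mem_image, Finset.mem_filter, Finset.mem_univ, true_and]
  constructor
  · rintro ⟨x, hx, rfl⟩; exact hx
  · intro hq
    obtain ⟨x, rfl⟩ := QuotientAddGroup.mk_surjective q
    exact ⟨x, hq, rfl⟩

lemma filter_of_fixed_image (g : ZMod m) {s : Finset (ZMod m)} (hs : s.image (· + g) = s) :
    Finset.univ.filter
      (fun x : ZMod m => (x : ZMod m ⧸ AddSubgroup.zmultiples g) ∈
        s.image (fun x : ZMod m => (x : ZMod m ⧸ AddSubgroup.zmultiples g))) = s := by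
  ext y
  simp only [Finset.mem_filter, Finset.mem_univ, true_and, Finset.mem_image]
  constructor
  · rintro ⟨x, hx, hxy⟩
    exact mem_of_mk_eq g hs hxy.symm hx
  · intro hy
    exact ⟨y, hy, rfl⟩

noncomputable def fixedEquiv (g : ZMod m) :
    fixedBy (SubFam m r) g ≃
      {T : Finset (ZMod m ⧸ AddSubgroup.zmultiples g) // addOrderOf g * T.card = r} where
  toFun u := ⟨u.1.1.image (fun x : ZMod m => (x : ZMod m ⧸ AddSubgroup.zmultiples g)), by
    have hfix : u.1.1.image (· + g) = u.1.1 := congrArg Subtype.val u.2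
    rw [fixed_image_card g hfix, u.1.2]⟩
  invFun v := ⟨⟨Finset.univ.filter
      (fun x : ZMod m => (x : ZMod m ⧸ AddSubgroup.zmultiples g) ∈ v.1), by
        rw [filter_preimage_card g, v.2]⟩,
      Subtype.ext (fixed_filter_mem g v.1)⟩
  left_inv u := by
    apply Subtype.ext; apply Subtype.ext
    exact filter_of_fixed_image g (congrArg Subtype.val u.2)
  right_inv v := by
    apply Subtype.ext
    exact fixed_image_of_filter g v.1

lemma card_fixedBy_eq (g : ZMod m) :
    Nat.card (fixedBy (SubFam m r) g) =
      if addOrderOf g ∣ r then (m / addOrderOf g).choose (r / addOrderOf g) else 0 := by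
  rw [Nat.card_congr (fixedEquiv g)]
  have hd : 0 < addOrderOf g := addOrderOf_pos g
  have hQ : Fintype.card (ZMod m ⧸ AddSubgroup.zmultiples g) = m / addOrderOf g := by
    have h1 : Nat.card (ZMod m) = Nat.card (ZMod m ⧸ AddSubgroup.zmultiples g)
        * Nat.card (AddSubgroup.zmultiples g) :=
      AddSubgroup.card_eq_card_quotient_mul_card_addSubgroup _
    rw [Nat.card_zmod, Nat.card_zmultiples] at h1
    rw [← Nat.card_eq_fintype_card]
    exact (Nat.div_eq_of_eq_mul_left hd h1).symm
  by_cases hdr : addOrderOf g ∣ r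
  · rw [if_pos hdr]
    have e2 : {T : Finset (ZMod m ⧸ AddSubgroup.zmultiples g) // addOrderOf g * T.card = r}
        ≃ {T : Finset (ZMod m ⧸ AddSubgroup.zmultiples g) // T.card = r / addOrderOf g} := by
      apply Equiv.subtypeEquivRight
      intro T
      obtain ⟨c, rfl⟩ := hdr
      rw [Nat.mul_div_cancel_left _ hd]
      constructor
      · intro h; exact (Nat.eq_of_mul_eq_mul_left hd h)
      · rintro rfl; rfl
    rw [Nat.card_congr e2, Nat.card_eq_fintype_card, Fintype.card_finset_len, hQ]
  · rw [if_neg hdr]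
    rw [Nat.card_eq_zero]
    left
    constructor
    rintro ⟨T, hT⟩
    exact hdr ⟨T.card, hT.symm⟩

end Fixed2

section Burnside

variable (m r : ℕ) [NeZero m]

noncomputable instance : Fintype (AddAction.orbitRel.Quotient (ZMod m) (SubFam m r)) :=
  Fintype.ofFinite _

noncomputable instance (g : ZMod m) : Fintype (fixedBy (SubFam m r) g) :=
  Fintype.ofFinite _

lemma burnside :
    (∑ g : ZMod m, Nat.card (fixedBy (SubFam m r) g)) =
      Nat.card (AddAction.orbitRel.Quotient (ZMod m) (SubFam m r)) * m := by
  have := AddAction.sum_card_fixedBy_eq_card_orbits_mul_card_addGroup (ZMod m) (SubFam m r)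
  rw [ZMod.card] at this
  rw [Nat.card_eq_fintype_card, ← this]
  exact Finset.sum_congr rfl fun g _ => Nat.card_eq_fintype_card

lemma sum_fixed_eq :
    (∑ g : ZMod m, Nat.card (fixedBy (SubFam m r) g)) =
      ∑ d ∈ (Nat.gcd r m).divisors, Nat.totient d * ((m / d).choose (r / d)) := by
  have hm : m ≠ 0 := NeZero.ne m
  calc (∑ g : ZMod m, Nat.card (fixedBy (SubFam m r) g))
      = ∑ g : ZMod m, (if addOrderOf g ∣ r then (m / addOrderOf g).choose (r / addOrderOf g)
          else 0) := Finset.sum_congr rfl fun g _ => card_fixedBy_eq g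
    _ = ∑ d ∈ m.divisors, ∑ g ∈ Finset.univ.filter (fun g : ZMod m => addOrderOf g = d),
          (if d ∣ r then (m / d).choose (r / d) else 0) := by
        rw [Finset.sum_fiberwise_of_maps_to' (g := fun g : ZMod m => addOrderOf g)
          (fun g _ => Nat.mem_divisors.mpr ⟨by
            have := addOrderOf_dvd_card (x := g); rwa [ZMod.card] at this, hm⟩)
          (f := fun d => (if d ∣ r then (m / d).choose (r / d) else 0))]
    _ = ∑ d ∈ m.divisors, Nat.totient d * (if d ∣ r then (m / d).choose (r / d) else 0) := by
        apply Finset.sum_congr rfl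
        intro d hd
        rw [Finset.sum_const, smul_eq_mul]
        congr 1
        have hdvd : d ∣ Fintype.card (ZMod m) := by
          rw [ZMod.card]; exact (Nat.mem_divisors.mp hd).1
        exact IsAddCyclic.card_addOrderOf_eq_totient hdvd
    _ = ∑ d ∈ (Nat.gcd r m).divisors, Nat.totient d * ((m / d).choose (r / d)) := by
        simp only [mul_ite, mul_zero]
        rw [← Finset.sum_filter]
        apply Finset.sum_congr _ (fun _ _ => rfl)
        ext d
        simp only [Finset.mem_filter, Nat.mem_divisors, Nat.dvd_gcd_iff]
        constructor
        · rintro ⟨⟨h1, _⟩, h2⟩; exact ⟨⟨h2, h1⟩, fun h => hm (Nat.eq_zero_of_gcd_eq_zero_right h)⟩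
        · rintro ⟨⟨h1, h2⟩, _⟩; exact ⟨⟨h2, hm⟩, h1⟩

end Burnside

section Algebra

lemma totient_moebius_q (e : ℕ) (he : 0 < e) :
    (e.totient : ℚ) = ∑ z ∈ e.divisors,
      ((ArithmeticFunction.moebius z : ℤ) : ℚ) * ((e / z : ℕ) : ℚ) := by
  have h := (ArithmeticFunction.sum_eq_iff_sum_mul_moebius_eq (R := ℚ)
      (f := fun d => (d.totient : ℚ)) (g := fun n => (n : ℚ))).mp
    (fun n hn => by exact_mod_cast congrArg (Nat.cast : ℕ → ℚ) (Nat.sum_totient n)) e he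
  rw [← h]
  exact Nat.sum_divisorsAntidiagonal
    (f := fun a b => ((ArithmeticFunction.moebius a : ℤ) : ℚ) * (b : ℚ))

/-- evaluation of the inner Möbius sum -/
lemma inner_moebius_sum (D r y : ℕ) (hy : y ∈ D.divisors) (hr : 0 < r) :
    ∑ x ∈ D.divisors.filter (y ∣ ·),
        (D : ℚ) * ((ArithmeticFunction.moebius (x / y) : ℤ) : ℚ) / (r * x)
      = ((D / y : ℕ).totient : ℚ) / r := by
  obtain ⟨hyD, hD0⟩ := Nat.mem_divisors.mp hy
  have hy0 : 0 < y := Nat.pos_of_mem_divisors hy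
  set e := D / y with he
  have hD : D = y * e := (Nat.mul_div_cancel' hyD).symm
  have he0 : 0 < e := by
    rcases Nat.eq_zero_or_pos e with h | h
    · exfalso; rw [hD, h, mul_zero] at hD0; exact hD0 rfl
    · exact h
  rw [show D.divisors.filter (y ∣ ·) = e.divisors.image (y * ·) from ?_]
  · rw [Finset.sum_image (fun a _ b _ hab => by
      exact Nat.eq_of_mul_eq_mul_left hy0 hab)]
    rw [totient_moebius_q e he0, Finset.sum_div]
    apply Finset.sum_congr rfl
    intro z hz
    obtain ⟨hze, -⟩ := Nat.mem_divisors.mp hz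
    have hz0 : 0 < z := Nat.pos_of_mem_divisors hz
    rw [Nat.mul_div_cancel_left z hy0]
    have hcast : ((e / z : ℕ) : ℚ) = (e : ℚ) / z := by
      rw [Nat.cast_div hze]; exact_mod_cast hz0.ne'
    rw [hcast, hD]
    have hy0' : (y : ℚ) ≠ 0 := by exact_mod_cast hy0.ne'
    have hz0' : (z : ℚ) ≠ 0 := by exact_mod_cast hz0.ne'
    have hr0' : (r : ℚ) ≠ 0 := by exact_mod_cast hr.ne'
    field_simp
    push_cast
    ring
  · ext x
    simp only [Finset.mem_filter, Nat.mem_divisors, Finset.mem_image]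
    constructor
    · rintro ⟨⟨hxD, -⟩, w, rfl⟩
      refine ⟨w, ⟨?_, he0.ne'⟩, rfl⟩
      rw [hD] at hxD
      exact (Nat.mul_dvd_mul_iff_left hy0).mp hxD
    · rintro ⟨w, ⟨hwe, -⟩, rfl⟩
      exact ⟨⟨by rw [hD]; exact Nat.mul_dvd_mul_left y hwe, hD0⟩, w, rfl⟩

end Algebra


/-- With `D = gcd(k+1, n+2)`, the number of orbits of the rotation action of `ℤ/(n+2)`
on `(k+1)`-element subsets equals the sum, over pairs `(x,y)` of positive divisors of `D`
with `y ∣ x`, of `D·μ(x/y)/((k+1)·x) · C(y(n+2)/D − 1, y(k+1)/D − 1)`. -/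
theorem stmt14 (n k : ℕ) (hk : 1 ≤ k) (hkn : k < n + 1) :
    (numOrbits (n + 2) (k + 1) : ℚ) =
      ∑ x ∈ (Nat.gcd (k + 1) (n + 2)).divisors, ∑ y ∈ x.divisors,
        ((Nat.gcd (k + 1) (n + 2) : ℚ) * ((ArithmeticFunction.moebius (x / y) : ℤ) : ℚ) /
            ((k + 1) * x)) *
          (Nat.choose (y * (n + 2) / Nat.gcd (k + 1) (n + 2) - 1)
            (y * (k + 1) / Nat.gcd (k + 1) (n + 2) - 1) : ℚ) := by
  haveI : NeZero (n + 2) := ⟨by omega⟩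
  have hr0 : 0 < k + 1 := Nat.succ_pos k
  have hD0 : 0 < Nat.gcd (k + 1) (n + 2) := Nat.gcd_pos_of_pos_left _ hr0
  have hDm : Nat.gcd (k + 1) (n + 2) ∣ (n + 2) := Nat.gcd_dvd_right _ _
  have hm0 : ((n + 2 : ℕ) : ℚ) ≠ 0 := by exact_mod_cast (by omega : (n+2:ℕ) ≠ 0)
  have hnat : numOrbits (n + 2) (k + 1) * (n + 2) =
      ∑ d ∈ (Nat.gcd (k + 1) (n + 2)).divisors,
        Nat.totient d * (((n + 2) / d).choose ((k + 1) / d)) := by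
    rw [numOrbits, numOrbits_eq, ← burnside, sum_fixed_eq]
  have hL : (numOrbits (n + 2) (k + 1) : ℚ) =
      (∑ d ∈ (Nat.gcd (k + 1) (n + 2)).divisors,
        (Nat.totient d : ℚ) * ((((n + 2) / d).choose ((k + 1) / d) : ℕ) : ℚ)) / ((n + 2 : ℕ) : ℚ) := by
    rw [eq_div_iff hm0]
    exact_mod_cast hnat
  rw [hL]
  -- swap the double sum on the RHS
  have hswap : ∀ x y : ℕ, (x ∈ (Nat.gcd (k + 1) (n + 2)).divisors ∧ y ∈ x.divisors) ↔
      (x ∈ (Nat.gcd (k + 1) (n + 2)).divisors.filter (y ∣ ·) ∧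
        y ∈ (Nat.gcd (k + 1) (n + 2)).divisors) := by
    intro x y
    simp only [Finset.mem_filter, Nat.mem_divisors]
    constructor
    · rintro ⟨⟨hxD, hD⟩, hyx, hx0⟩
      exact ⟨⟨⟨hxD, hD⟩, hyx⟩, hyx.trans hxD, hD⟩
    · rintro ⟨⟨⟨hxD, hD⟩, hyx⟩, -, -⟩
      refine ⟨⟨hxD, hD⟩, hyx, ?_⟩
      intro h; rw [h] at hxD
      exact hD (Nat.eq_zero_of_zero_dvd hxD)
  rw [Finset.sum_comm' hswap]
  rw [← Nat.sum_div_divisors (Nat.gcd (k + 1) (n + 2)) (fun d =>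
      (Nat.totient d : ℚ) * ((((n + 2) / d).choose ((k + 1) / d) : ℕ) : ℚ))]
  rw [Finset.sum_div]
  apply Finset.sum_congr rfl
  intro y hy
  -- the inner sum: factor out the (constant) binomial coefficient
  have hinner : ∑ x ∈ (Nat.gcd (k + 1) (n + 2)).divisors.filter (y ∣ ·),
      ((Nat.gcd (k + 1) (n + 2) : ℚ) * ((ArithmeticFunction.moebius (x / y) : ℤ) : ℚ) /
            ((k + 1) * x)) *
          (Nat.choose (y * (n + 2) / Nat.gcd (k + 1) (n + 2) - 1)
            (y * (k + 1) / Nat.gcd (k + 1) (n + 2) - 1) : ℚ)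
      = (((Nat.gcd (k + 1) (n + 2) / y : ℕ).totient : ℚ) / ((k + 1 : ℕ) : ℚ)) *
          (Nat.choose (y * (n + 2) / Nat.gcd (k + 1) (n + 2) - 1)
            (y * (k + 1) / Nat.gcd (k + 1) (n + 2) - 1) : ℚ) := by
    rw [← Finset.sum_mul]
    congr 1
    have := inner_moebius_sum (Nat.gcd (k + 1) (n + 2)) (k + 1) y hy hr0
    rw [← this]
    apply Finset.sum_congr rfl
    intro x hx
    push_cast
    ring
  rw [hinner]
  -- now the per-term identity
  have hy0 : 0 < y := Nat.pos_of_mem_divisors hy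
  obtain ⟨hyD, -⟩ := Nat.mem_divisors.mp hy
  set D := Nat.gcd (k + 1) (n + 2) with hDdef
  set d := D / y with hddef
  have hd0 : 0 < d := Nat.div_pos (Nat.le_of_dvd hD0 hyD) hy0
  have hyd : y * d = D := Nat.mul_div_cancel' hyD
  have hdr : d ∣ k + 1 := dvd_trans (hddef ▸ Nat.div_dvd_of_dvd hyD) (Nat.gcd_dvd_left _ _)
  have hdm : d ∣ n + 2 := dvd_trans (hddef ▸ Nat.div_dvd_of_dvd hyD) (Nat.gcd_dvd_right _ _)
  set a := (n + 2) / d with hadef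
  set b := (k + 1) / d with hbdef
  have hda : d * a = n + 2 := Nat.mul_div_cancel' hdm
  have hdb : d * b = k + 1 := Nat.mul_div_cancel' hdr
  have ha1 : 1 ≤ a := Nat.div_pos (Nat.le_of_dvd (by omega) hdm) hd0
  have hb1 : 1 ≤ b := Nat.div_pos (Nat.le_of_dvd hr0 hdr) hd0
  have hia : y * (n + 2) / D = a := by
    rw [← hda, ← hyd, show y * (d * a) = (y * d) * a by ring, Nat.mul_div_cancel_left _
      (by positivity : 0 < y * d)]
  have hib : y * (k + 1) / D = b := by
    rw [← hdb, ← hyd, show y * (d * b) = (y * d) * b by ring, Nat.mul_div_cancel_left _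
      (by positivity : 0 < y * d)]
  rw [hia, hib]
  -- binomial identity
  have hkey : (k + 1) * Nat.choose a b = (n + 2) * Nat.choose (a - 1) (b - 1) := by
    have h := Nat.add_one_mul_choose_eq (a - 1) (b - 1)
    rw [Nat.sub_add_cancel ha1, Nat.sub_add_cancel hb1] at h
    calc (k + 1) * Nat.choose a b = d * (Nat.choose a b * b) := by rw [← hdb]; ring
      _ = d * (a * Nat.choose (a - 1) (b - 1)) := by rw [← h]
      _ = (n + 2) * Nat.choose (a - 1) (b - 1) := by rw [← hda]; ring
  have hr0' : ((k + 1 : ℕ) : ℚ) ≠ 0 := by exact_mod_cast hr0.ne'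
  have hkeyQ : ((k + 1 : ℕ) : ℚ) * (Nat.choose a b : ℚ)
      = ((n + 2 : ℕ) : ℚ) * (Nat.choose (a - 1) (b - 1) : ℚ) := by exact_mod_cast hkey
  field_simp
  push_cast at hkeyQ ⊢
  linear_combination hkeyQ
end

section
/- Let S : X_n^k → X_n^k be the permutation defined by S(α) = α + 1 if α_k < n+1−k and S(α) = (0, α₀, …, α_{k−1}) if α_k = n+1−k. Then for every α ∈ X_n^k, S^{n+2}(α) = α; in particular the size of every orbit of ⟨S⟩ divides n+2. -/
/-- The permutation `S` of `X_n^k`: `S(α) = α + 1` if `α k < n+1−k`, and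
`S(α) = (0, α₀, …, α_{k−1})` if `α k = n+1−k`. -/
def Sfun (n k : ℕ) (α : ℕ → ℕ) : ℕ → ℕ :=
  if α k = n + 1 - k then
    fun i => if i = 0 then 0 else if i ≤ k then α (i - 1) else 0
  else
    fun i => if i ≤ k then α i + 1 else 0

namespace Stmt16Aux

/-- encoding of a sequence as a subset of `ZMod (n+2)` -/
def enc (n k : ℕ) (α : ℕ → ℕ) : Finset (ZMod (n + 2)) :=
  (Finset.range (k + 1)).image fun i => ((α i + i : ℕ) : ZMod (n + 2))

/-- encoding as a subset of ℕ -/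
def vset (k : ℕ) (α : ℕ → ℕ) : Finset ℕ :=
  (Finset.range (k + 1)).image fun i => α i + i

lemma bound (n k : ℕ) (hkn : k < n + 1) (α : ℕ → ℕ) (hα : IsXseq n k α)
    {i : ℕ} (hi : i ≤ k) : α i + i ≤ n + 1 := by
  have h1 : α i ≤ α k := hα.1 i k hi le_rfl
  have h2 : α k ≤ n + 1 - k := hα.2.1
  omega

lemma smono (n k : ℕ) (α : ℕ → ℕ) (hα : IsXseq n k α)
    {i j : ℕ} (hij : i < j) (hj : j ≤ k) : α i + i < α j + j := by
  have := hα.1 i j hij.le hj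
  omega

lemma count (n k : ℕ) (α : ℕ → ℕ) (hα : IsXseq n k α) {i : ℕ} (hi : i ≤ k) :
    ((vset k α).filter (· < α i + i)).card = i := by
  classical
  rw [vset, Finset.filter_image]
  have hset : (Finset.range (k + 1)).filter (fun j => α j + j < α i + i) = Finset.range i := by
    ext j
    simp only [Finset.mem_filter, Finset.mem_range]
    constructor
    · rintro ⟨hj, hlt⟩
      by_contra hji
      push_neg at hji
      have := hα.1 i j hji (by omega : j ≤ k)
      omega
    · intro hj
      exact ⟨by omega, smono n k α hα hj hi⟩
  rw [hset, Finset.card_image_of_injOn, Finset.card_range]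
  intro a ha b hb hab
  simp only at hab
  simp only [Finset.coe_range, Set.mem_Iio] at ha hb
  by_contra hne
  rcases Nat.lt_or_ge a b with h | h
  · exact absurd hab (Nat.ne_of_lt (smono n k α hα h (by omega)))
  · have := smono n k α hα (lt_of_le_of_ne h (Ne.symm hne)) (by omega)
    omega

lemma unique_rank {s : Finset ℕ} {a b : ℕ} (ha : a ∈ s) (hb : b ∈ s)
    (h : (s.filter (· < a)).card = (s.filter (· < b)).card) : a = b := by
  classical
  by_contra hne
  have key : ∀ x y : ℕ, x ∈ s → x < y →
      (s.filter (· < x)).card < (s.filter (· < y)).card := by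
    intro x y hx hxy
    apply Finset.card_lt_card
    constructor
    · intro z hz
      simp only [Finset.mem_filter] at hz ⊢
      exact ⟨hz.1, lt_trans hz.2 hxy⟩
    · intro hsub
      have : x ∈ s.filter (· < y) := Finset.mem_filter.2 ⟨hx, hxy⟩
      have := hsub this
      simp only [Finset.mem_filter] at this
      omega
  rcases Nat.lt_or_ge a b with hab | hab
  · exact absurd h (Nat.ne_of_lt (key a b ha hab))
  · exact absurd h.symm (Nat.ne_of_lt (key b a hb (lt_of_le_of_ne hab (Ne.symm hne))))

lemma vset_eq_of_enc_eq (n k : ℕ) (hkn : k < n + 1) (α β : ℕ → ℕ)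
    (hα : IsXseq n k α) (hβ : IsXseq n k β) (h : enc n k α = enc n k β) :
    vset k α = vset k β := by
  classical
  have key : ∀ γ : ℕ → ℕ, IsXseq n k γ → vset k γ = (enc n k γ).image ZMod.val := by
    intro γ hγ
    rw [enc, Finset.image_image, vset]
    apply Finset.image_congr
    intro i hi
    simp only [Finset.coe_range, Set.mem_Iio] at hi
    simp only [Function.comp_apply]
    rw [ZMod.val_natCast_of_lt]
    have := bound n k hkn γ hγ (show i ≤ k by omega)
    omega
  rw [key α hα, key β hβ, h]

lemma decode (n k : ℕ) (hkn : k < n + 1) (α β : ℕ → ℕ)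
    (hα : IsXseq n k α) (hβ : IsXseq n k β) (h : enc n k α = enc n k β) : α = β := by
  have hv := vset_eq_of_enc_eq n k hkn α β hα hβ h
  funext i
  rcases Nat.lt_or_ge k i with hi | hi
  · rw [hα.2.2 i hi, hβ.2.2 i hi]
  · have hma : α i + i ∈ vset k β := by
      rw [← hv, vset]
      exact Finset.mem_image.2 ⟨i, Finset.mem_range.2 (by omega), rfl⟩
    have hmb : β i + i ∈ vset k β :=
      Finset.mem_image.2 ⟨i, Finset.mem_range.2 (by omega), rfl⟩
    have hca : ((vset k β).filter (· < α i + i)).card = i := by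
      rw [← hv]; exact count n k α hα hi
    have hcb : ((vset k β).filter (· < β i + i)).card = i := count n k β hβ hi
    have := unique_rank hma hmb (hca.trans hcb.symm)
    omega

lemma step (n k : ℕ) (hk : 1 ≤ k) (hkn : k < n + 1) (α : ℕ → ℕ) (hα : IsXseq n k α) :
    IsXseq n k (Sfun n k α) ∧ enc n k (Sfun n k α) = (enc n k α).image (· + 1) := by
  classical
  obtain ⟨hmono, hle, hzero⟩ := hα
  by_cases h : α k = n + 1 - k
  · have hS : Sfun n k α = fun i => if i = 0 then 0 else if i ≤ k then α (i - 1) else 0 := by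
      rw [Sfun, if_pos h]
    constructor
    · refine ⟨?_, ?_, ?_⟩
      · intro i j hij hj
        rw [hS]
        by_cases hi0 : i = 0
        · simp [hi0]
        · have hj0 : j ≠ 0 := by omega
          simp only [if_neg hi0, if_neg hj0, if_pos (le_trans hij hj), if_pos hj]
          exact hmono (i - 1) (j - 1) (by omega) (by omega)
      · rw [hS]
        simp only [if_neg (by omega : ¬ k = 0), if_pos le_rfl]
        exact le_trans (hmono (k - 1) k (by omega) le_rfl) hle
      · intro i hi
        rw [hS]
        simp only [if_neg (by omega : ¬ i = 0), if_neg (by omega : ¬ i ≤ k)]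
    · have hz : ((n + 2 : ℕ) : ZMod (n + 2)) = 0 := ZMod.natCast_self _
      have h1 : α k + k = n + 1 := by omega
      have hR : ∀ x : ZMod (n + 2), x ∈ (enc n k α).image (· + 1) ↔
          ∃ j, j < k + 1 ∧ ((α j + j : ℕ) : ZMod (n + 2)) + 1 = x := by
        intro x
        rw [enc, Finset.image_image]
        simp [Finset.mem_image, Finset.mem_range, Function.comp]
      ext x
      rw [hR]
      simp only [enc, Finset.mem_image, Finset.mem_range]
      constructor
      · rintro ⟨i, hi, rfl⟩
        by_cases hi0 : i = 0
        · refine ⟨k, by omega, ?_⟩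
          subst hi0
          rw [hS, h1]
          rw [show ((n + 1 : ℕ) : ZMod (n + 2)) + 1 = ((n + 2 : ℕ) : ZMod (n + 2)) by
            push_cast; ring, hz]
          norm_num
        · refine ⟨i - 1, by omega, ?_⟩
          rw [hS]
          simp only [if_neg hi0, if_pos (show i ≤ k by omega)]
          rw [show α (i - 1) + i = (α (i - 1) + (i - 1)) + 1 by omega]
          push_cast
          ring
      · rintro ⟨j, hj, rfl⟩
        by_cases hjk : j = k
        · refine ⟨0, by omega, ?_⟩
          subst hjk
          rw [hS, h1]
          rw [show ((n + 1 : ℕ) : ZMod (n + 2)) + 1 = ((n + 2 : ℕ) : ZMod (n + 2)) by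
            push_cast; ring, hz]
          norm_num
        · refine ⟨j + 1, by omega, ?_⟩
          rw [hS]
          simp only [if_neg (by omega : ¬ j + 1 = 0), if_pos (show j + 1 ≤ k by omega),
            Nat.add_sub_cancel]
          rw [show α j + (j + 1) = (α j + j) + 1 by omega]
          push_cast
          ring
  · have hlt : α k < n + 1 - k := lt_of_le_of_ne hle h
    have hS : Sfun n k α = fun i => if i ≤ k then α i + 1 else 0 := by
      rw [Sfun, if_neg h]
    constructor
    · refine ⟨?_, ?_, ?_⟩
      · intro i j hij hj
        rw [hS]
        simp only [if_pos (le_trans hij hj), if_pos hj]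
        exact Nat.add_le_add_right (hmono i j hij hj) 1
      · rw [hS]; simp only [if_pos le_rfl]; omega
      · intro i hi
        rw [hS]; simp only [if_neg (by omega : ¬ i ≤ k)]
    · rw [enc, enc, Finset.image_image]
      apply Finset.image_congr
      intro i hi
      simp only [Finset.coe_range, Set.mem_Iio] at hi
      rw [hS]
      simp only [Function.comp_apply, if_pos (show i ≤ k by omega)]
      push_cast
      ring

lemma iter (n k : ℕ) (hk : 1 ≤ k) (hkn : k < n + 1) (α : ℕ → ℕ) (hα : IsXseq n k α)
    (m : ℕ) : IsXseq n k ((Sfun n k)^[m] α) ∧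
      enc n k ((Sfun n k)^[m] α) = (enc n k α).image (· + (m : ZMod (n + 2))) := by
  induction m with
  | zero => simpa using hα
  | succ m ih =>
    rw [Function.iterate_succ_apply']
    obtain ⟨ih1, ih2⟩ := ih
    obtain ⟨h1, h2⟩ := step n k hk hkn _ ih1
    refine ⟨h1, ?_⟩
    rw [h2, ih2, Finset.image_image]
    apply Finset.image_congr
    intro x _
    simp only [Function.comp_apply]
    push_cast
    ring

theorem main (n k : ℕ) (hk : 1 ≤ k) (hkn : k < n + 1)
    (α : ℕ → ℕ) (hα : IsXseq n k α) : (Sfun n k)^[n + 2] α = α := by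
  obtain ⟨h1, h2⟩ := iter n k hk hkn α hα (n + 2)
  apply decode n k hkn _ _ h1 hα
  rw [h2, ZMod.natCast_self]
  simp

end Stmt16Aux

/-- For every `α ∈ X_n^k`, `S^{n+2}(α) = α`; in particular the size of the `⟨S⟩`-orbit
of `α` divides `n+2`. -/
theorem stmt16 (n k : ℕ) (hk : 1 ≤ k) (hkn : k < n + 1)
    (α : ℕ → ℕ) (hα : IsXseq n k α) :
    (Sfun n k)^[n + 2] α = α ∧
    Nat.card {β : ℕ → ℕ | ∃ i : ℕ, (Sfun n k)^[i] α = β} ∣ (n + 2) := by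
  have hper : (Sfun n k)^[n + 2] α = α := Stmt16Aux.main n k hk hkn α hα
  refine ⟨hper, ?_⟩
  have hpp : Function.IsPeriodicPt (Sfun n k) (n + 2) α := hper
  set d := Function.minimalPeriod (Sfun n k) α with hd
  have hdvd : d ∣ n + 2 := hpp.minimalPeriod_dvd
  have hset : {β : ℕ → ℕ | ∃ i : ℕ, (Sfun n k)^[i] α = β}
      = (fun i => (Sfun n k)^[i] α) '' Set.Iio d := by
    ext β
    constructor
    · rintro ⟨i, rfl⟩
      refine ⟨i % d, ?_, ?_⟩
      · exact Nat.mod_lt _ (hpp.minimalPeriod_pos (by omega))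
      · exact Function.iterate_mod_minimalPeriod_eq
    · rintro ⟨i, _, rfl⟩
      exact ⟨i, rfl⟩
  rw [hset]
  have hinj : Set.InjOn (fun i => (Sfun n k)^[i] α) (Set.Iio d) :=
    Function.iterate_injOn_Iio_minimalPeriod
  rw [Nat.card_image_of_injOn hinj, Nat.card_eq_card_toFinset]
  simpa using hdvd
end

section
/- For n ≥ 1, the number of pairs ((α,β),(i,j)) of index pairs with either 0 ≤ α ≤ β < i−1 ≤ j−1 ≤ n−1 or 0 ≤ α < i ≤ j < β ≤ n equals 2·C(n+2, 4). -/
open Finset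

lemma card4 {a b c d : ℕ} (h1 : a < b) (h2 : b < c) (h3 : c < d) :
    ({a, b, c, d} : Finset ℕ).card = 4 := by
  rw [card_insert_of_notMem (by simp; omega), card_insert_of_notMem (by simp; omega),
    card_insert_of_notMem (by simp; omega), card_singleton]

lemma count4 (N : ℕ) :
    (((range N ×ˢ range N) ×ˢ (range N ×ˢ range N)).filter
      (fun t => t.1.1 < t.1.2 ∧ t.1.2 < t.2.1 ∧ t.2.1 < t.2.2)).card = Nat.choose N 4 := by
  have htgt : ((range N).powersetCard 4).card = Nat.choose N 4 := by
    rw [card_powersetCard, card_range]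
  rw [← htgt]
  apply card_bij (fun t _ => ({t.1.1, t.1.2, t.2.1, t.2.2} : Finset ℕ))
  · rintro ⟨⟨a, b⟩, c, d⟩ ht
    simp only [mem_filter, mem_product, mem_range] at ht
    obtain ⟨⟨⟨ha, hb⟩, hc, hd⟩, h1, h2, h3⟩ := ht
    rw [mem_powersetCard]
    refine ⟨?_, card4 h1 h2 h3⟩
    intro x hx
    simp only [mem_insert, mem_singleton] at hx
    rw [mem_range]; omega
  · rintro ⟨⟨a, b⟩, c, d⟩ ht ⟨⟨a', b'⟩, c', d'⟩ ht' he
    simp only [mem_filter, mem_product, mem_range] at ht ht'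
    obtain ⟨-, h1, h2, h3⟩ := ht
    obtain ⟨-, h1', h2', h3'⟩ := ht'
    have H : ∀ x : ℕ, (x = a ∨ x = b ∨ x = c ∨ x = d) ↔ (x = a' ∨ x = b' ∨ x = c' ∨ x = d') := by
      intro x; simpa using Finset.ext_iff.mp he x
    have ha := (H a).mp (Or.inl rfl)
    have hb := (H b).mp (Or.inr (Or.inl rfl))
    have hc := (H c).mp (Or.inr (Or.inr (Or.inl rfl)))
    have hd := (H d).mp (Or.inr (Or.inr (Or.inr rfl)))
    have ha' := (H a').mpr (Or.inl rfl)
    have hb' := (H b').mpr (Or.inr (Or.inl rfl))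
    have hc' := (H c').mpr (Or.inr (Or.inr (Or.inl rfl)))
    have hd' := (H d').mpr (Or.inr (Or.inr (Or.inr rfl)))
    have : a = a' ∧ b = b' ∧ c = c' ∧ d = d' := by omega
    simp [Prod.ext_iff, this.1, this.2.1, this.2.2.1, this.2.2.2]
  · intro s hs
    rw [mem_powersetCard] at hs
    obtain ⟨hsub, hcard⟩ := hs
    set f := s.orderEmbOfFin hcard with hf
    have hm : ∀ i : Fin 4, f i ∈ s := fun i => s.orderEmbOfFin_mem hcard i
    have hmono := (s.orderEmbOfFin hcard).strictMono
    have h01 : f 0 < f 1 := hmono (by decide)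
    have h12 : f 1 < f 2 := hmono (by decide)
    have h23 : f 2 < f 3 := hmono (by decide)
    have hrange : ∀ i : Fin 4, f i < N := fun i => mem_range.mp (hsub (hm i))
    refine ⟨((f 0, f 1), f 2, f 3), ?_, ?_⟩
    · simp only [mem_filter, mem_product, mem_range]
      exact ⟨⟨⟨hrange 0, hrange 1⟩, hrange 2, hrange 3⟩, h01, h12, h23⟩
    · apply Finset.eq_of_subset_of_card_le
      · intro x hx
        simp only [mem_insert, mem_singleton] at hx
        rcases hx with h | h | h | h <;> exact h ▸ hm _
      · rw [hcard, card4 h01 h12 h23]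

/-- For `n ≥ 1`, the number of pairs `((α,β),(i,j))` of index pairs with either
`0 ≤ α ≤ β < i−1 ≤ j−1 ≤ n−1` or `0 ≤ α < i ≤ j < β ≤ n` equals `2·C(n+2, 4)`. -/
theorem stmt18 (n : ℕ) (hn : 1 ≤ n) :
    Nat.card {q : (ℕ × ℕ) × (ℕ × ℕ) //
      (q.1.1 ≤ q.1.2 ∧ q.1.2 + 1 < q.2.1 ∧ q.2.1 ≤ q.2.2 ∧ q.2.2 ≤ n) ∨
      (q.1.1 < q.2.1 ∧ q.2.1 ≤ q.2.2 ∧ q.2.2 < q.1.2 ∧ q.1.2 ≤ n)} =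
      2 * Nat.choose (n + 2) 4 := by
  classical
  set B := (range (n + 1) ×ˢ range (n + 1)) ×ˢ (range (n + 1) ×ˢ range (n + 1)) with hB
  set P1 : (ℕ × ℕ) × (ℕ × ℕ) → Prop := fun q =>
    q.1.1 ≤ q.1.2 ∧ q.1.2 + 1 < q.2.1 ∧ q.2.1 ≤ q.2.2 ∧ q.2.2 ≤ n with hP1
  set P2 : (ℕ × ℕ) × (ℕ × ℕ) → Prop := fun q =>
    q.1.1 < q.2.1 ∧ q.2.1 ≤ q.2.2 ∧ q.2.2 < q.1.2 ∧ q.1.2 ≤ n with hP2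
  have hset : {q : (ℕ × ℕ) × (ℕ × ℕ) | P1 q ∨ P2 q} =
      ↑(B.filter (fun q => P1 q ∨ P2 q)) := by
    ext ⟨⟨a, b⟩, c, d⟩
    simp only [Set.mem_setOf_eq, coe_filter, mem_product, mem_range, hP1, hP2, hB,
      Set.mem_setOf_eq]
    constructor
    · intro h; exact ⟨by omega, h⟩
    · tauto
  have key : Nat.card {q : (ℕ × ℕ) × (ℕ × ℕ) // P1 q ∨ P2 q} =
      (B.filter (fun q => P1 q ∨ P2 q)).card := by
    have e1 : Nat.card {q : (ℕ × ℕ) × (ℕ × ℕ) // P1 q ∨ P2 q} =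
        ({q : (ℕ × ℕ) × (ℕ × ℕ) | P1 q ∨ P2 q}).ncard :=
      Nat.card_coe_set_eq _
    rw [e1, hset, Set.ncard_coe_finset]
  rw [show Nat.card {q : (ℕ × ℕ) × (ℕ × ℕ) //
      (q.1.1 ≤ q.1.2 ∧ q.1.2 + 1 < q.2.1 ∧ q.2.1 ≤ q.2.2 ∧ q.2.2 ≤ n) ∨
      (q.1.1 < q.2.1 ∧ q.2.1 ≤ q.2.2 ∧ q.2.2 < q.1.2 ∧ q.1.2 ≤ n)} =
      Nat.card {q : (ℕ × ℕ) × (ℕ × ℕ) // P1 q ∨ P2 q} from rfl, key]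
  have hdisj : Disjoint (B.filter P1) (B.filter P2) := by
    rw [disjoint_left]
    rintro ⟨⟨a, b⟩, c, d⟩ h1 h2
    simp only [mem_filter, hP1, hP2] at h1 h2
    omega
  rw [filter_or, card_union_of_disjoint hdisj]
  set T := ((range (n + 2) ×ˢ range (n + 2)) ×ˢ (range (n + 2) ×ˢ range (n + 2))).filter
      (fun t => t.1.1 < t.1.2 ∧ t.1.2 < t.2.1 ∧ t.2.1 < t.2.2) with hT
  have hTc : T.card = Nat.choose (n + 2) 4 := count4 (n + 2)
  have c1 : (B.filter P1).card = T.card := by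
    apply card_bij (fun q _ => ((q.1.1, q.1.2 + 1), (q.2.1, q.2.2 + 1)))
    · rintro ⟨⟨a, b⟩, c, d⟩ h
      simp only [hT, mem_filter, mem_product, mem_range, hP1, hB] at h ⊢
      omega
    · rintro ⟨⟨a, b⟩, c, d⟩ h ⟨⟨a', b'⟩, c', d'⟩ h' he
      simp only [Prod.mk.injEq] at he ⊢
      omega
    · rintro ⟨⟨a, b⟩, c, d⟩ ht
      simp only [hT, mem_filter, mem_product, mem_range] at ht
      refine ⟨((a, b - 1), (c, d - 1)), ?_, ?_⟩
      · simp only [mem_filter, mem_product, mem_range, hP1, hB]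
        omega
      · dsimp only
        simp only [Prod.mk.injEq, true_and, and_true]
        omega
  have c2 : (B.filter P2).card = T.card := by
    apply card_bij (fun q _ => ((q.1.1, q.2.1), (q.2.2 + 1, q.1.2 + 1)))
    · rintro ⟨⟨a, b⟩, c, d⟩ h
      simp only [hT, mem_filter, mem_product, mem_range, hP2, hB] at h ⊢
      omega
    · rintro ⟨⟨a, b⟩, c, d⟩ h ⟨⟨a', b'⟩, c', d'⟩ h' he
      simp only [Prod.mk.injEq] at he ⊢
      omega
    · rintro ⟨⟨a, b⟩, c, d⟩ ht
      simp only [hT, mem_filter, mem_product, mem_range] at ht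
      refine ⟨((a, d - 1), (b, c - 1)), ?_, ?_⟩
      · simp only [mem_filter, mem_product, mem_range, hP2, hB]
        omega
      · dsimp only
        simp only [Prod.mk.injEq, true_and, and_true]
        omega
  rw [c1, c2, hTc]
  ring
end
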